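/- Weak parity in deterministic games: Let C = ℕ and let ⊑_wp be the preference relation induced by the weak parity condition W_wp (μ ⊑_wp μ' iff μ(W_wp) ≤ μ'(W_wp)). Then every initialized two-player deterministic arena admits a pure memoryless P-subgame perfect equilibrium for ⊑_wp; in particular, both players have pure memoryless P-optimal strategies in every initialized two-player deterministic arena. -/

import Mathlib

open MeasureTheory (Measure IsProbabilityMeasure)
open scoped ENNReal
open scoped Classical

namespace StochGames

/-! ### Infinite color sequences with the cylinder σ-algebra -/

def ColSeq (C : Type*) := ℕ → C

variable {C : Type*}

/-- The cylinder of a finite word of colors. -/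
def wordCyl (u : List C) : Set (ColSeq C) :=
  {w | ∀ i : Fin u.length, w i.1 = u.get i}

/-- The σ-algebra `F` on `C^ω` generated by cylinders. -/
instance instColSeqMS : MeasurableSpace (ColSeq C) :=
  MeasurableSpace.generateFrom {E | ∃ u : List C, E = wordCyl u}

/-- Prepending a finite word to an infinite word. -/
def prependWord (u : List C) (w : ColSeq C) : ColSeq C :=
  fun i => if h : i < u.length then u.get ⟨i, h⟩ else w (i - u.length)

/-- The shifted measure `wμ`, with `wμ(E) = μ {w' | w·w' ∈ E}`. -/
noncomputable def shiftMeasure (u : List C) (μ : Measure (ColSeq C)) : Measure (ColSeq C) :=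
  μ.map (prependWord u)

/-- A preference relation: a total preorder on `Dist(C^ω, F)`. -/
structure PrefRel (C : Type*) where
  le : Measure (ColSeq C) → Measure (ColSeq C) → Prop
  refl : ∀ μ : Measure (ColSeq C), IsProbabilityMeasure μ → le μ μ
  trans : ∀ μ ν ξ : Measure (ColSeq C), IsProbabilityMeasure μ → IsProbabilityMeasure ν →
      IsProbabilityMeasure ξ → le μ ν → le ν ξ → le μ ξ
  total : ∀ μ ν : Measure (ColSeq C), IsProbabilityMeasure μ → IsProbabilityMeasure ν →
      le μ ν ∨ le ν μ

/-! ### Memory skeletons -/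

structure MemorySkeleton (C : Type*) where
  M : Type
  init : M
  upd : M → C → M
  reach_fin : ∀ B : Set C, B.Finite →
      Set.Finite {m : M | ∃ u : List C, (∀ c ∈ u, c ∈ B) ∧ u.foldl upd init = m}

namespace MemorySkeleton

/-- Extension `α̂_upd` of the update function to finite words. -/
def run (sk : MemorySkeleton C) (m : sk.M) (u : List C) : sk.M := u.foldl sk.upd m

/-- `W_{m → m'}`: the words read from `m` up to `m'`. -/
def lang (sk : MemorySkeleton C) (m m' : sk.M) : Set (List C) := {u | sk.run m u = m'}

/-- Product of two memory skeletons. -/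
def prod (sk1 sk2 : MemorySkeleton C) : MemorySkeleton C where
  M := sk1.M × sk2.M
  init := (sk1.init, sk2.init)
  upd := fun m c => (sk1.upd m.1 c, sk2.upd m.2 c)
  reach_fin := by
    intro B hB
    have key : ∀ (u : List C) (m : sk1.M × sk2.M),
        u.foldl (fun m c => (sk1.upd m.1 c, sk2.upd m.2 c)) m =
          (u.foldl sk1.upd m.1, u.foldl sk2.upd m.2) := by
      intro u
      induction u with
      | nil => intro m; rfl
      | cons c rest ih =>
          intro m
          simp only [List.foldl_cons]
          exact ih (sk1.upd m.1 c, sk2.upd m.2 c)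
    refine Set.Finite.subset ((sk1.reach_fin B hB).prod (sk2.reach_fin B hB)) ?_
    rintro ⟨m1, m2⟩ ⟨u, hu, hrun⟩
    rw [key] at hrun
    exact ⟨⟨u, hu, congrArg Prod.fst hrun⟩, ⟨u, hu, congrArg Prod.snd hrun⟩⟩

end MemorySkeleton



/-! ### Arenas -/

/-- A two-player stochastic turn-based arena. `owner s = true` means player 1 controls `s`. -/
structure Arena (C : Type*) where
  S : Type
  A : Type
  [finS : Finite S]
  [finA : Finite A]
  [decS : DecidableEq S]
  owner : S → Bool
  tr : S → A → Option (PMF S)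
  col : S → A → C
  nonblocking : ∀ s : S, ∃ a : A, (tr s a).isSome

attribute [instance] Arena.finS Arena.finA Arena.decS

namespace Arena

/-- `a` is available in `s`. -/
def avail (Ar : Arena C) (s : Ar.S) (a : Ar.A) : Prop := (Ar.tr s a).isSome

/-- Transition probability `δ(s, a)(s')` (`0` if `a` is unavailable). -/
noncomputable def prob (Ar : Arena C) (s : Ar.S) (a : Ar.A) (s' : Ar.S) : ℝ≥0∞ :=
  match Ar.tr s a with
  | none => 0
  | some p => p s'

/-- Colors along a sequence of steps starting from a given state. -/
def colsFrom (Ar : Arena C) : Ar.S → List (Ar.A × Ar.S) → List C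
  | _, [] => []
  | s, (a, s') :: rest => Ar.col s a :: Ar.colsFrom s' rest

/-- Validity of a sequence of steps from a state: each transition has positive probability. -/
def ValidSteps (Ar : Arena C) : Ar.S → List (Ar.A × Ar.S) → Prop
  | _, [] => True
  | s, (a, s') :: rest => 0 < Ar.prob s a s' ∧ Ar.ValidSteps s' rest

/-- An arena is deterministic if every defined transition is a Dirac distribution. -/
def IsDeterministic (Ar : Arena C) : Prop :=
  ∀ s a p, Ar.tr s a = some p → ∃ s', p = PMF.pure s'

/-- One-player arena of the player `pl`: the other player has exactly one available action
everywhere. -/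
def IsOnePlayer (Ar : Arena C) (pl : Bool) : Prop :=
  ∀ s : Ar.S, Ar.owner s = !pl → ∃! a : Ar.A, Ar.avail s a

/-- The (finite) set of colors appearing in an arena. -/
def colorSet (Ar : Arena C) : Set C := Set.range fun p : Ar.S × Ar.A => Ar.col p.1 p.2

end Arena

/-! ### Histories -/

/-- A history `s₀ a₁ s₁ … aₙ sₙ` (validity is a separate predicate). -/
structure Hist (Ar : Arena C) where
  first : Ar.S
  steps : List (Ar.A × Ar.S)

namespace Hist

variable {Ar : Arena C}

/-- `out(ρ)`: the last state of a history. -/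
def out (ρ : Hist Ar) : Ar.S := (ρ.steps.map Prod.snd).getLastD ρ.first

/-- `ĉol(ρ)`: the finite word of colors along a history. -/
def cols (ρ : Hist Ar) : List C := Ar.colsFrom ρ.first ρ.steps

def Valid (ρ : Hist Ar) : Prop := Ar.ValidSteps ρ.first ρ.steps

/-- `ρ ∈ Hists(A, I)`. -/
def Starts (ρ : Hist Ar) (I : Set Ar.S) : Prop := ρ.Valid ∧ ρ.first ∈ I

/-- `ρ ∈ Hists_i(A, I)` where `i` is the player `pl`. -/
def ForPlayer (ρ : Hist Ar) (I : Set Ar.S) (pl : Bool) : Prop :=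
  ρ.Starts I ∧ Ar.owner ρ.out = pl

/-- The prefix of a history keeping its first `n` steps. -/
def take (ρ : Hist Ar) (n : ℕ) : Hist Ar := ⟨ρ.first, ρ.steps.take n⟩

/-- The `i`-th state `sᵢ` along a history. -/
def stateAt (ρ : Hist Ar) (i : ℕ) : Ar.S := ((ρ.steps.map Prod.snd).take i).getLastD ρ.first

end Hist

/-! ### Strategies -/

/-- A strategy: a map from histories to distributions over actions.  The support condition
and the restriction to the relevant histories are separate predicates. -/
def Strategy (Ar : Arena C) := Hist Ar → PMF Ar.A

namespace Strategy

variable {Ar : Arena C}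

/-- The support condition for a strategy of player `pl` on `(Ar, I)`. -/
def ProperFor (σ : Strategy Ar) (I : Set Ar.S) (pl : Bool) : Prop :=
  ∀ ρ : Hist Ar, ρ.ForPlayer I pl → ∀ a, σ ρ a ≠ 0 → Ar.avail ρ.out a

/-- Pure strategy (on the relevant histories). -/
def PureFor (σ : Strategy Ar) (I : Set Ar.S) (pl : Bool) : Prop :=
  ∀ ρ : Hist Ar, ρ.ForPlayer I pl → ∃ a, σ ρ = PMF.pure a

/-- Memoryless strategy (on the relevant histories). -/
def MemlessFor (σ : Strategy Ar) (I : Set Ar.S) (pl : Bool) : Prop :=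
  ∀ ρ ρ' : Hist Ar, ρ.ForPlayer I pl → ρ'.ForPlayer I pl → ρ.out = ρ'.out → σ ρ = σ ρ'

/-- Strategy based on the memory skeleton `sk`, i.e. encoded by some Mealy machine
`(sk, nxt)`. -/
def BasedOnFor (σ : Strategy Ar) (sk : MemorySkeleton C) (I : Set Ar.S) (pl : Bool) : Prop :=
  ∃ nxt : Ar.S → sk.M → PMF Ar.A,
    ∀ ρ : Hist Ar, ρ.ForPlayer I pl → σ ρ = nxt ρ.out (sk.run sk.init ρ.cols)

/-- Finite-memory strategy. -/
def FMFor (σ : Strategy Ar) (I : Set Ar.S) (pl : Bool) : Prop :=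
  ∃ sk : MemorySkeleton C, σ.BasedOnFor sk I pl

/-- The shifted strategy `σ ↾ ρ`. -/
noncomputable def shift (σ : Strategy Ar) (ρ : Hist Ar) : Strategy Ar :=
  fun ρ' => if ρ'.first = ρ.out then σ ⟨ρ.first, ρ.steps ++ ρ'.steps⟩ else σ ρ'

end Strategy

/-- The four types of strategies. -/
inductive StratType | PFM | P | RFM | G

/-- Membership of a strategy (of player `pl`, on initial states `I`) in a strategy type. -/
def StratType.Mem {Ar : Arena C} (X : StratType) (σ : Strategy Ar) (I : Set Ar.S)
    (pl : Bool) : Prop :=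
  σ.ProperFor I pl ∧
    match X with
    | .PFM => σ.PureFor I pl ∧ σ.FMFor I pl
    | .P => σ.PureFor I pl
    | .RFM => σ.FMFor I pl
    | .G => True

/-! ### The probability measure on plays -/

/-- A play `s₀ a₁ s₁ a₂ s₂ …` (validity is irrelevant for measure-zero sets). -/
structure Play (Ar : Arena C) where
  st : ℕ → Ar.S
  ac : ℕ → Ar.A

/-- The cylinder of a history: all plays extending it. -/
def cylSet {Ar : Arena C} (ρ : Hist Ar) : Set (Play Ar) :=
  {p | p.st 0 = ρ.first ∧ ∀ i : Fin ρ.steps.length,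
      p.ac i.1 = (ρ.steps.get i).1 ∧ p.st (i.1 + 1) = (ρ.steps.get i).2}

/-- The σ-algebra on plays generated by cylinders. -/
instance instPlayMS {Ar : Arena C} : MeasurableSpace (Play Ar) :=
  MeasurableSpace.generateFrom {E | ∃ ρ : Hist Ar, E = cylSet ρ}

/-- `ĉol` on plays: the infinite sequence of colors. -/
def colsω {Ar : Arena C} (p : Play Ar) : ColSeq C := fun i => Ar.col (p.st i) (p.ac i)

/-- The weight of one step of a history, `σ_{i_j}(prefix)(a) · δ(out(prefix), a)(s')`. -/
noncomputable def stepWeight (Ar : Arena C) (σ1 σ2 : Strategy Ar) (pre : Hist Ar)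
    (a : Ar.A) (s' : Ar.S) : ℝ≥0∞ :=
  (if Ar.owner pre.out then σ1 pre a else σ2 pre a) * Ar.prob pre.out a s'

/-- Auxiliary product of step weights. -/
noncomputable def histProbAux (Ar : Arena C) (σ1 σ2 : Strategy Ar) (first : Ar.S) :
    List (Ar.A × Ar.S) → List (Ar.A × Ar.S) → ℝ≥0∞
  | _, [] => 1
  | done, (a, s') :: rest =>
      stepWeight Ar σ1 σ2 ⟨first, done⟩ a s' *
        histProbAux Ar σ1 σ2 first (done ++ [(a, s')]) rest

/-- The probability `∏_{j=1}^n σ_{i_j}(s₀a₁…s_{j−1})(a_j) · δ(s_{j−1}, a_j)(s_j)` of a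
history under a pair of strategies. -/
noncomputable def histProb (Ar : Arena C) (σ1 σ2 : Strategy Ar) (ρ : Hist Ar) : ℝ≥0∞ :=
  histProbAux Ar σ1 σ2 ρ.first [] ρ.steps

/-- Specification of the measure `Pr^{σ1,σ2}_{Ar,s}` on plays: the unique probability
measure giving each cylinder of a history from `s` the prescribed product probability
(and giving cylinders of histories not starting at `s` probability `0`). -/
def IsPlayMeasure (Ar : Arena C) (σ1 σ2 : Strategy Ar) (s : Ar.S)
    (μ : Measure (Play Ar)) : Prop :=
  IsProbabilityMeasure μ ∧
    (∀ ρ : Hist Ar, ρ.first = s → μ (cylSet ρ) = histProb Ar σ1 σ2 ρ) ∧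
    (∀ ρ : Hist Ar, ρ.first ≠ s → μ (cylSet ρ) = 0)

/-- `Pr^{σ1,σ2}_{Ar,s}`, the measure on plays induced by two strategies from `s`
(obtained from its defining property by choice). -/
noncomputable def playMeasure (Ar : Arena C) (σ1 σ2 : Strategy Ar) (s : Ar.S) :
    Measure (Play Ar) :=
  @Classical.epsilon _ ⟨0⟩ (IsPlayMeasure Ar σ1 σ2 s)

/-- `Pc^{σ1,σ2}_{Ar,s}`, the pushforward of `Pr^{σ1,σ2}_{Ar,s}` under `ĉol`. -/
noncomputable def Pc (Ar : Arena C) (σ1 σ2 : Strategy Ar) (s : Ar.S) :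
    Measure (ColSeq C) :=
  (playMeasure Ar σ1 σ2 s).map colsω

/-- A canonical strategy for the passive player in a one-player arena
(it plays the unique available action wherever the choice is forced). -/
noncomputable def defaultStrat (Ar : Arena C) : Strategy Ar :=
  fun ρ => PMF.pure (Ar.nonblocking ρ.out).choose

/-- `Pc^{σ1}_{Ar,s}` in a one-player arena of player 1. -/
noncomputable def Pc1 (Ar : Arena C) (σ1 : Strategy Ar) (s : Ar.S) : Measure (ColSeq C) :=
  Pc Ar σ1 (defaultStrat Ar) s

/-! ### Optimality, Nash equilibria, subgame perfection -/

/-- `UCol^X_⊑(Ar, s, σ1)`. -/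
def UColSet (le : Measure (ColSeq C) → Measure (ColSeq C) → Prop) (Ar : Arena C)
    (Xt : StratType) (s : Ar.S) (σ1 : Strategy Ar) : Set (Measure (ColSeq C)) :=
  {μ | IsProbabilityMeasure μ ∧ ∃ σ2 : Strategy Ar, Xt.Mem σ2 {s} false ∧ le (Pc Ar σ1 σ2 s) μ}

/-- `DCol^X_⊑(Ar, s, σ2)`. -/
def DColSet (le : Measure (ColSeq C) → Measure (ColSeq C) → Prop) (Ar : Arena C)
    (Xt : StratType) (s : Ar.S) (σ2 : Strategy Ar) : Set (Measure (ColSeq C)) :=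
  {μ | IsProbabilityMeasure μ ∧ ∃ σ1 : Strategy Ar, Xt.Mem σ1 {s} true ∧ le μ (Pc Ar σ1 σ2 s)}

/-- `X`-optimality for player 1 in the initialized game `(Ar, I, le)`. -/
def OptimalFor1 (le : Measure (ColSeq C) → Measure (ColSeq C) → Prop) (Ar : Arena C)
    (I : Set Ar.S) (Xt : StratType) (σ1 : Strategy Ar) : Prop :=
  Xt.Mem σ1 I true ∧
    ∀ s ∈ I, ∀ σ1' : Strategy Ar, Xt.Mem σ1' I true →
      UColSet le Ar Xt s σ1 ⊆ UColSet le Ar Xt s σ1'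

/-- `X`-optimality for player 2 in the initialized game `(Ar, I, le)`. -/
def OptimalFor2 (le : Measure (ColSeq C) → Measure (ColSeq C) → Prop) (Ar : Arena C)
    (I : Set Ar.S) (Xt : StratType) (σ2 : Strategy Ar) : Prop :=
  Xt.Mem σ2 I false ∧
    ∀ s ∈ I, ∀ σ2' : Strategy Ar, Xt.Mem σ2' I false →
      DColSet le Ar Xt s σ2 ⊆ DColSet le Ar Xt s σ2'

/-- `X`-optimality for the player `pl`. -/
def OptimalFor (pl : Bool) (le : Measure (ColSeq C) → Measure (ColSeq C) → Prop)
    (Ar : Arena C) (I : Set Ar.S) (Xt : StratType) (σ : Strategy Ar) : Prop :=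
  match pl with
  | true => OptimalFor1 le Ar I Xt σ
  | false => OptimalFor2 le Ar I Xt σ

/-- `X`-Nash equilibrium in the initialized game `(Ar, I, le)`. -/
def IsNE' (le : Measure (ColSeq C) → Measure (ColSeq C) → Prop) (Ar : Arena C)
    (I : Set Ar.S) (Xt : StratType) (σ1 σ2 : Strategy Ar) : Prop :=
  Xt.Mem σ1 I true ∧ Xt.Mem σ2 I false ∧
    ∀ s ∈ I,
      (∀ σ1' : Strategy Ar, Xt.Mem σ1' I true → le (Pc Ar σ1' σ2 s) (Pc Ar σ1 σ2 s)) ∧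
      (∀ σ2' : Strategy Ar, Xt.Mem σ2' I false → le (Pc Ar σ1 σ2 s) (Pc Ar σ1 σ2' s))

/-- The shifted relation `⊑_w`. -/
def shiftLE (pref : PrefRel C) (u : List C) :
    Measure (ColSeq C) → Measure (ColSeq C) → Prop :=
  fun μ ν => pref.le (shiftMeasure u μ) (shiftMeasure u ν)

/-- `X`-subgame perfection for player 1. -/
def SPFor1 (pref : PrefRel C) (Ar : Arena C) (I : Set Ar.S) (Xt : StratType)
    (σ1 : Strategy Ar) : Prop :=
  ∀ ρ : Hist Ar, ρ.Starts I →
    OptimalFor1 (shiftLE pref ρ.cols) Ar {ρ.out} Xt (σ1.shift ρ)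

/-- `X`-subgame perfection for player 2. -/
def SPFor2 (pref : PrefRel C) (Ar : Arena C) (I : Set Ar.S) (Xt : StratType)
    (σ2 : Strategy Ar) : Prop :=
  ∀ ρ : Hist Ar, ρ.Starts I →
    OptimalFor2 (shiftLE pref ρ.cols) Ar {ρ.out} Xt (σ2.shift ρ)

/-- `X`-subgame perfect equilibrium. -/
def IsSPE (pref : PrefRel C) (Ar : Arena C) (I : Set Ar.S) (Xt : StratType)
    (σ1 σ2 : Strategy Ar) : Prop :=
  ∀ ρ : Hist Ar, ρ.Starts I →
    IsNE' (shiftLE pref ρ.cols) Ar {ρ.out} Xt (σ1.shift ρ) (σ2.shift ρ)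

/-! ### Initialized arenas and constructions on them -/

/-- An initialized arena. -/
structure InitArena (C : Type*) where
  Ar : Arena C
  I : Set Ar.S
  ne : I.Nonempty

/-- Coverability of an initialized arena by a memory skeleton. -/
def Covered (X : InitArena C) (sk : MemorySkeleton C) : Prop :=
  ∃ φ : X.Ar.S → sk.M, (∀ s ∈ X.I, φ s = sk.init) ∧
    ∀ s a s', 0 < X.Ar.prob s a s' → sk.upd (φ s) (X.Ar.col s a) = φ s'

/-- Isomorphism of initialized arenas. -/
def Isomorphic (X Y : InitArena C) : Prop :=
  ∃ (e : X.Ar.S ≃ Y.Ar.S) (f : X.Ar.S → X.Ar.A → Y.Ar.A),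
    (∀ s, Y.Ar.owner (e s) = X.Ar.owner s) ∧
    (∀ s, s ∈ X.I ↔ e s ∈ Y.I) ∧
    (∀ s, Set.BijOn (f s) {a | X.Ar.avail s a} {b | Y.Ar.avail (e s) b}) ∧
    (∀ s a, X.Ar.avail s a → ∀ s', Y.Ar.prob (e s) (f s a) (e s') = X.Ar.prob s a s') ∧
    (∀ s a, X.Ar.avail s a → Y.Ar.col (e s) (f s a) = X.Ar.col s a)

/-! ### Product of an initialized arena with a memory skeleton -/

/-- Reachable state/memory pairs in the product. -/
inductive ProdReach (Ar : Arena C) (I : Set Ar.S) (sk : MemorySkeleton C) :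
    Ar.S × sk.M → Prop
  | base : ∀ s ∈ I, ProdReach Ar I sk (s, sk.init)
  | step : ∀ s m a s', ProdReach Ar I sk (s, m) → 0 < Ar.prob s a s' →
      ProdReach Ar I sk (s', sk.upd m (Ar.col s a))

lemma prodReach_snd {Ar : Arena C} {I : Set Ar.S} {sk : MemorySkeleton C} :
    ∀ {p : Ar.S × sk.M}, ProdReach Ar I sk p →
      ∃ u : List C, (∀ c ∈ u, c ∈ Ar.colorSet) ∧ u.foldl sk.upd sk.init = p.2 := by
  intro p h
  induction h with
  | base s hs => exact ⟨[], by simp⟩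
  | step s m a s' _ _ ih =>
      obtain ⟨u, hu, hr⟩ := ih
      refine ⟨u ++ [Ar.col s a], ?_, ?_⟩
      · intro c hc
        rcases List.mem_append.1 hc with h' | h'
        · exact hu c h'
        · simp only [List.mem_singleton] at h'
          subst h'
          exact ⟨(s, a), rfl⟩
      · simp [List.foldl_append, hr]

lemma prodReach_finite (Ar : Arena C) (I : Set Ar.S) (sk : MemorySkeleton C) :
    Set.Finite {p : Ar.S × sk.M | ProdReach Ar I sk p} := by
  have hB : Ar.colorSet.Finite := Set.finite_range _
  refine Set.Finite.subset ((Set.finite_univ (α := Ar.S)).prod (sk.reach_fin _ hB)) ?_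
  rintro ⟨s, m⟩ hp
  exact ⟨Set.mem_univ s, prodReach_snd hp⟩

/-- The product initialized arena `(A, S_init) ⋉ M`. -/
noncomputable def prodArena (X : InitArena C) (sk : MemorySkeleton C) : InitArena C where
  Ar :=
    { S := {p : X.Ar.S × sk.M // ProdReach X.Ar X.I sk p}
      A := X.Ar.A
      finS := (prodReach_finite X.Ar X.I sk).to_subtype
      finA := X.Ar.finA
      decS := Classical.decEq _
      owner := fun q => X.Ar.owner q.1.1
      tr := fun q a => (X.Ar.tr q.1.1 a).map fun p => p.map fun s' =>
        if h : ProdReach X.Ar X.I sk (s', sk.upd q.1.2 (X.Ar.col q.1.1 a)) then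
          ⟨(s', sk.upd q.1.2 (X.Ar.col q.1.1 a)), h⟩
        else q
      col := fun q a => X.Ar.col q.1.1 a
      nonblocking := by
        intro q
        obtain ⟨a, ha⟩ := X.Ar.nonblocking q.1.1
        refine ⟨a, ?_⟩
        cases htr : X.Ar.tr q.1.1 a with
        | none => rw [htr] at ha; simp at ha
        | some p => simp [htr] }
  I := {q | q.1.1 ∈ X.I ∧ q.1.2 = sk.init}
  ne := by
    obtain ⟨s, hs⟩ := X.ne
    exact ⟨⟨(s, sk.init), ProdReach.base s hs⟩, hs, rfl⟩

/-- Closure of a class of initialized arenas under product with a memory skeleton. -/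
def ClosedByProduct (𝔄 : Set (InitArena C)) (sk : MemorySkeleton C) : Prop :=
  ∀ X ∈ 𝔄, prodArena X sk ∈ 𝔄

/-! ### Subarenas -/

/-- Restriction of an arena to a set of kept actions. -/
noncomputable def restrictArena (Ar : Arena C) (keep : Ar.S → Set Ar.A)
    (hk : ∀ s, ∃ a ∈ keep s, Ar.avail s a) : Arena C where
  S := Ar.S
  A := Ar.A
  owner := Ar.owner
  tr := fun s a => if a ∈ keep s then Ar.tr s a else none
  col := Ar.col
  nonblocking := by
    intro s
    obtain ⟨a, h1, h2⟩ := hk s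
    exact ⟨a, by simp only [if_pos h1]; exact h2⟩

/-- Closure under initialized subarenas. -/
def ClosedBySubarena (𝔄 : Set (InitArena C)) : Prop :=
  ∀ X ∈ 𝔄, ∀ (keep : X.Ar.S → Set X.Ar.A) (hk : ∀ s, ∃ a ∈ keep s, X.Ar.avail s a),
    (⟨restrictArena X.Ar keep hk, X.I, X.ne⟩ : InitArena C) ∈ 𝔄

/-! ### Splits -/

/-- Renaming of states for copies of the arena in the split on `t`:
`t` becomes the merged state (represented by `none`) and any other state `s`
becomes the copy `s^lab` (represented by `some (lab, s)`). -/
def reName (Ar : Arena C) (t : Ar.S) (lab : Ar.A) (s : Ar.S) : Option (Ar.A × Ar.S) :=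
  if s = t then none else some (lab, s)

/-- Forgetting the copy labels of the split. -/
def splitBase (Ar : Arena C) (t : Ar.S) : Option (Ar.A × Ar.S) → Ar.S
  | none => t
  | some (_, s) => s

/-- The split of an arena on a state `t`. -/
noncomputable def splitArena (Ar : Arena C) (t : Ar.S) : Arena C where
  S := Option (Ar.A × Ar.S)
  A := Ar.A
  finS := Finite.of_equiv _ (Equiv.optionEquivSumPUnit.{0, 0} (Ar.A × Ar.S)).symm
  finA := Ar.finA
  decS := Classical.decEq _
  owner := fun q => Ar.owner (splitBase Ar t q)
  tr := fun q b =>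
    match q with
    | none => (Ar.tr t b).map fun p => p.map (reName Ar t b)
    | some (lab, s) => (Ar.tr s b).map fun p => p.map (reName Ar t lab)
  col := fun q b => Ar.col (splitBase Ar t q) b
  nonblocking := by
    rintro (_ | ⟨lab, s⟩)
    · obtain ⟨b, hb⟩ := Ar.nonblocking t
      refine ⟨b, ?_⟩
      cases htr : Ar.tr t b with
      | none => rw [htr] at hb; simp at hb
      | some p => simp [htr]
    · obtain ⟨b, hb⟩ := Ar.nonblocking s
      refine ⟨b, ?_⟩
      cases htr : Ar.tr s b with
      | none => rw [htr] at hb; simp at hb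
      | some p => simp [htr]

/-- Initial states of the split (union over `a ∈ Act(t)` of the copies of `S_init`). -/
def splitInit (X : InitArena C) (t : X.Ar.S) : Set (Option (X.Ar.A × X.Ar.S)) :=
  {q | ∃ a s, X.Ar.avail t a ∧ s ∈ X.I ∧ q = reName X.Ar t a s}

/-- Initial states `S_init^a` of the copy `a` within the split. -/
def splitInitA (X : InitArena C) (t : X.Ar.S) (a : X.Ar.A) :
    Set (Option (X.Ar.A × X.Ar.S)) :=
  {q | ∃ s ∈ X.I, q = reName X.Ar t a s}

/-- The split of an initialized arena on a state `t`. -/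
noncomputable def splitInitArena (X : InitArena C) (t : X.Ar.S) : InitArena C where
  Ar := splitArena X.Ar t
  I := splitInit X t
  ne := by
    obtain ⟨s, hs⟩ := X.ne
    obtain ⟨a, ha⟩ := X.Ar.nonblocking t
    exact ⟨reName X.Ar t a s, a, s, ha, hs, rfl⟩

/-- Closure under splits. -/
def ClosedBySplit (𝔄 : Set (InitArena C)) : Prop :=
  ∀ X ∈ 𝔄, ∀ t : X.Ar.S, splitInitArena X t ∈ 𝔄

/-! ### Prefix extensions -/

/-- The prefix-extension `A_{w ⇝ s₀}` of an initialized arena: a fresh chain of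
player-1 states reading the word `w` and leading to `s₀` is added, and the first
state of the chain becomes an additional initial state. -/
noncomputable def prefixExtArena (X : InitArena C) (w : List C) (s0 : X.Ar.S) :
    InitArena C where
  Ar :=
    { S := X.Ar.S ⊕ Fin w.length
      A := X.Ar.A ⊕ Unit
      decS := Classical.decEq _
      owner := fun q =>
        match q with
        | Sum.inl u => X.Ar.owner u
        | Sum.inr _ => true
      tr := fun q b =>
        match q, b with
        | Sum.inl u, Sum.inl a => (X.Ar.tr u a).map fun p => p.map Sum.inl
        | Sum.inl _, Sum.inr _ => none
        | Sum.inr _, Sum.inl _ => none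
        | Sum.inr i, Sum.inr _ => some (PMF.pure
            (if h : (i : ℕ) + 1 < w.length then Sum.inr ⟨(i : ℕ) + 1, h⟩ else Sum.inl s0))
      col := fun q b =>
        match q, b with
        | Sum.inl u, Sum.inl a => X.Ar.col u a
        | Sum.inl u, Sum.inr _ => X.Ar.col u (X.Ar.nonblocking u).choose
        | Sum.inr i, _ => w.get i
      nonblocking := by
        rintro (u | i)
        · obtain ⟨a, ha⟩ := X.Ar.nonblocking u
          refine ⟨Sum.inl a, ?_⟩
          cases htr : X.Ar.tr u a with
          | none => rw [htr] at ha; simp at ha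
          | some p => simp [htr]
        · exact ⟨Sum.inr (), rfl⟩ }
  I := Sum.inl '' X.I ∪ {if h : 0 < w.length then Sum.inr ⟨0, h⟩ else Sum.inl s0}
  ne := ⟨_, Or.inr rfl⟩

/-- Closure under prefix-extensions. -/
def ClosedByPrefixExt (𝔄 : Set (InitArena C)) : Prop :=
  ∀ X ∈ 𝔄, ∀ (w : List C) (s0 : X.Ar.S), prefixExtArena X w s0 ∈ 𝔄

/-! ### Merging two arenas on a state -/

def mergeRen1 (A1 : Arena C) (s1 : A1.S) (A2 : Arena C) :
    A1.S → Option (A1.S ⊕ A2.S) :=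
  fun u => if u = s1 then none else some (Sum.inl u)

def mergeRen2 (A1 : Arena C) (A2 : Arena C) (s2 : A2.S) :
    A2.S → Option (A1.S ⊕ A2.S) :=
  fun u => if u = s2 then none else some (Sum.inr u)

/-- The merged arena `(A1, s1) ⊔ (A2, s2)`; the merged state `t` is `none`. -/
noncomputable def mergeArena (A1 : Arena C) (s1 : A1.S) (A2 : Arena C) (s2 : A2.S) :
    Arena C where
  S := Option (A1.S ⊕ A2.S)
  A := A1.A ⊕ A2.A
  finS := Finite.of_equiv _ (Equiv.optionEquivSumPUnit.{0, 0} (A1.S ⊕ A2.S)).symm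
  decS := Classical.decEq _
  owner := fun q =>
    match q with
    | none => A1.owner s1
    | some (Sum.inl u) => A1.owner u
    | some (Sum.inr u) => A2.owner u
  tr := fun q b =>
    match q, b with
    | none, Sum.inl a => (A1.tr s1 a).map fun p => p.map (mergeRen1 A1 s1 A2)
    | none, Sum.inr a => (A2.tr s2 a).map fun p => p.map (mergeRen2 A1 A2 s2)
    | some (Sum.inl u), Sum.inl a => (A1.tr u a).map fun p => p.map (mergeRen1 A1 s1 A2)
    | some (Sum.inl _), Sum.inr _ => none
    | some (Sum.inr u), Sum.inr a => (A2.tr u a).map fun p => p.map (mergeRen2 A1 A2 s2)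
    | some (Sum.inr _), Sum.inl _ => none
  col := fun q b =>
    match q, b with
    | none, Sum.inl a => A1.col s1 a
    | none, Sum.inr a => A2.col s2 a
    | some (Sum.inl u), Sum.inl a => A1.col u a
    | some (Sum.inl _), Sum.inr a => A2.col s2 a
    | some (Sum.inr u), Sum.inr a => A2.col u a
    | some (Sum.inr _), Sum.inl a => A1.col s1 a
  nonblocking := by
    rintro (_ | (u | u))
    · obtain ⟨a, ha⟩ := A1.nonblocking s1
      refine ⟨Sum.inl a, ?_⟩
      cases htr : A1.tr s1 a with
      | none => rw [htr] at ha; simp at ha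
      | some p => simp [htr]
    · obtain ⟨a, ha⟩ := A1.nonblocking u
      refine ⟨Sum.inl a, ?_⟩
      cases htr : A1.tr u a with
      | none => rw [htr] at ha; simp at ha
      | some p => simp [htr]
    · obtain ⟨a, ha⟩ := A2.nonblocking u
      refine ⟨Sum.inr a, ?_⟩
      cases htr : A2.tr u a with
      | none => rw [htr] at ha; simp at ha
      | some p => simp [htr]

/-! ### One-player classes, monotony and selectivity -/

/-- The kind of arenas considered: deterministic or stochastic. -/
inductive ArenaKind | det | stoch

/-- Membership in the class `D^Y_1` of one-player arenas of player 1,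
deterministic if `Y = det`, arbitrary (stochastic) if `Y = stoch`. -/
def InD1 (Y : ArenaKind) (Ar : Arena C) : Prop :=
  Ar.IsOnePlayer true ∧ (Y = ArenaKind.det → Ar.IsDeterministic)

/-- `[Ar]^X_s`: the distributions over color sequences induced by the strategies of
player 1 of type `X` in the one-player arena `(Ar, s)`. -/
def stratSet (Ar : Arena C) (Xt : StratType) (s : Ar.S) : Set (Measure (ColSeq C)) :=
  {μ | ∃ σ1 : Strategy Ar, Xt.Mem σ1 {s} true ∧ μ = Pc1 Ar σ1 s}

/-- `wΛ`: a set of measures shifted by a finite word. -/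
def shiftSet (u : List C) (Λ : Set (Measure (ColSeq C))) : Set (Measure (ColSeq C)) :=
  shiftMeasure u '' Λ

/-- `Λ1 ⊑ Λ2` for sets of distributions. -/
def prefSetLE (pref : PrefRel C) (Λ1 Λ2 : Set (Measure (ColSeq C))) : Prop :=
  ∀ μ1 ∈ Λ1, ∃ μ2 ∈ Λ2, pref.le μ1 μ2

/-- `X`-`Y`-`M`-monotony. -/
def MonotoneFor (pref : PrefRel C) (Xt : StratType) (Y : ArenaKind)
    (sk : MemorySkeleton C) : Prop :=
  ∀ m : sk.M, ∀ (A1 : Arena C) (s1 : A1.S) (A2 : Arena C) (s2 : A2.S),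
    InD1 Y A1 → InD1 Y A2 →
    (∀ w ∈ sk.lang sk.init m,
        prefSetLE pref (shiftSet w (stratSet A2 Xt s2)) (shiftSet w (stratSet A1 Xt s1))) ∨
    (∀ w ∈ sk.lang sk.init m,
        prefSetLE pref (shiftSet w (stratSet A1 Xt s1)) (shiftSet w (stratSet A2 Xt s2)))

/-- `ĉol(Hists(Ar, s, s))`: color words of histories from `s` back to `s`. -/
def loopColsIn (Ar : Arena C) (s : Ar.S) : Set (List C) :=
  {u | ∃ ρ : Hist Ar, ρ.Valid ∧ ρ.first = s ∧ ρ.out = s ∧ ρ.cols = u}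

/-- `X`-`Y`-`M`-selectivity. -/
def SelectiveFor (pref : PrefRel C) (Xt : StratType) (Y : ArenaKind)
    (sk : MemorySkeleton C) : Prop :=
  ∀ m : sk.M, ∀ (A1 : Arena C) (s1 : A1.S) (A2 : Arena C) (s2 : A2.S),
    InD1 Y A1 → InD1 Y A2 →
    A1.owner s1 = true → A2.owner s2 = true →
    loopColsIn A1 s1 ⊆ sk.lang m m → loopColsIn A2 s2 ⊆ sk.lang m m →
    ∀ w ∈ sk.lang sk.init m,
      prefSetLE pref
        (shiftSet w (stratSet (mergeArena A1 s1 A2 s2) Xt (none : Option (A1.S ⊕ A2.S))))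
        (shiftSet w (stratSet A1 Xt s1) ∪ shiftSet w (stratSet A2 Xt s2))

/-- Mixing is useless for a preference relation. -/
def MixingUseless (pref : PrefRel C) : Prop :=
  ∀ (ι : Type) (_ : Countable ι) (lam : ι → ℝ≥0∞) (μ ν : ι → Measure (ColSeq C)),
    (∀ i, 0 < lam i) → (∑' i, lam i) = 1 →
    (∀ i, IsProbabilityMeasure (μ i)) → (∀ i, IsProbabilityMeasure (ν i)) →
    (∀ i, pref.le (μ i) (ν i)) →
    pref.le (MeasureTheory.Measure.sum fun i => lam i • μ i)
      (MeasureTheory.Measure.sum fun i => lam i • ν i)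

/-- Pure strategies based on `sk` suffice for player 1 to play `X`-optimally in the
class `D^Y_1` of initialized one-player arenas of player 1. -/
def SufficesD1 (pref : PrefRel C) (Xt : StratType) (Y : ArenaKind)
    (sk : MemorySkeleton C) : Prop :=
  ∀ X : InitArena C, InD1 Y X.Ar →
    ∃ σ1 : Strategy X.Ar, σ1.PureFor X.I true ∧ σ1.BasedOnFor sk X.I true ∧
      OptimalFor1 pref.le X.Ar X.I Xt σ1

/-! ### Concatenation of a history and a play, coinciding strategies -/

/-- Concatenation `ρπ` of a history and a play (without repeating `out(ρ)`). -/
def Hist.concatPlay {Ar : Arena C} (ρ : Hist Ar) (π : Play Ar) : Play Ar where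
  st := fun i => if i < ρ.steps.length then ρ.stateAt i else π.st (i - ρ.steps.length)
  ac := fun i =>
    if h : i < ρ.steps.length then (ρ.steps.get ⟨i, h⟩).1 else π.ac (i - ρ.steps.length)

/-- `σ` coincides with `τ` on the history `ρ`: they agree on all proper prefixes of `ρ`. -/
def Coincide {Ar : Arena C} (σ τ : Strategy Ar) (ρ : Hist Ar) : Prop :=
  ∀ i < ρ.steps.length, σ (ρ.take i) = τ (ρ.take i)

/-! ### Histories and strategies through a split -/

/-- `Π^a`: the steps of a history relabelled with the last action played at `t`
(label `a` by default before the first visit to `t`). -/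
def piSteps (Ar : Arena C) (t : Ar.S) :
    Ar.A → Ar.S → List (Ar.A × Ar.S) → List (Ar.A × Option (Ar.A × Ar.S))
  | _, _, [] => []
  | lab, cur, (b, s') :: rest =>
      (b, reName Ar t (if cur = t then b else lab) s') ::
        piSteps Ar t (if cur = t then b else lab) s' rest

/-- `Π^a` on histories: from `Hists(Ar, ·)` to histories of the split on `t`. -/
def piHist (Ar : Arena C) (t : Ar.S) (a : Ar.A) (ρ : Hist Ar) : Hist (splitArena Ar t) :=
  ⟨reName Ar t a ρ.first, piSteps Ar t a ρ.first ρ.steps⟩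

/-- `(Π^a)⁻¹`: forgetting the copy labels of a history of the split. -/
def unSplitHist (Ar : Arena C) (t : Ar.S) (ρ : Hist (splitArena Ar t)) : Hist Ar :=
  ⟨splitBase Ar t ρ.first, ρ.steps.map fun q => (q.1, splitBase Ar t q.2)⟩

/-- `Λ_i^a(σ) = σ ∘ (Π^a)⁻¹`: the strategy on the split corresponding to a strategy
on the original arena. -/
def lamStrat (Ar : Arena C) (t : Ar.S) (σ : Strategy Ar) : Strategy (splitArena Ar t) :=
  fun ρ => σ (unSplitHist Ar t ρ)

/-- Uniform relabelling of a history of `Ar` as a history of the copy `a` of the split. -/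
def embHist (Ar : Arena C) (t : Ar.S) (a : Ar.A) (ρ : Hist Ar) : Hist (splitArena Ar t) :=
  ⟨reName Ar t a ρ.first, ρ.steps.map fun q => (q.1, reName Ar t a q.2)⟩

/-- The initialized subarena `A_a` of an arena in which only the action `a` is
available at `t`. -/
noncomputable def restrictToAction (Ar : Arena C) (t : Ar.S) (a : Ar.A)
    (hA : Ar.avail t a) : Arena C :=
  restrictArena Ar (fun u => if u = t then {a} else Set.univ) (by
    intro u
    by_cases h : u = t
    · subst h
      exact ⟨a, by simp, hA⟩
    · obtain ⟨b, hb⟩ := Ar.nonblocking u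
      exact ⟨b, by simp [h], hb⟩)

/-! ### Weak parity -/

/-- The weak parity winning condition on `C = ℕ`: the greatest color seen exists
and is even. -/
def Wwp : Set (ColSeq ℕ) :=
  {w | ∃ m : ℕ, (∀ i : ℕ, w i ≤ m) ∧ (∃ i : ℕ, w i = m) ∧ Even m}

/-- The preference relation induced by the weak parity winning condition. -/
def prefWP : PrefRel ℕ where
  le := fun μ ν => μ Wwp ≤ ν Wwp
  refl := fun _ _ => le_rfl
  trans := fun _ _ _ _ _ _ h1 h2 => le_trans h1 h2
  total := fun _ _ _ _ => le_total _ _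

/-- The memory skeleton `M_max` remembering the greatest color seen so far. -/
noncomputable def Mmax : MemorySkeleton ℕ where
  M := ℕ
  init := 0
  upd := max
  reach_fin := by
    intro B hB
    have hbd : ∀ (u : List ℕ) (a : ℕ), (∀ c ∈ u, c ∈ B) →
        u.foldl max a ≤ max a (hB.toFinset.sup id) := by
      intro u
      induction u with
      | nil => intro a _; simp
      | cons c rest ih =>
          intro a hc
          have hcB : c ∈ hB.toFinset := hB.mem_toFinset.2 (hc c (by simp))
          have hcs : c ≤ hB.toFinset.sup id := Finset.le_sup (f := id) hcB
          have h1 := ih (max a c) (fun d hd => hc d (by simp [hd]))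
          simp only [List.foldl_cons]
          omega
    refine Set.Finite.subset (Set.finite_Iic (hB.toFinset.sup id)) ?_
    rintro m ⟨u, hu, hrun⟩
    have := hbd u 0 hu
    rw [hrun] at this
    simpa using this

/-! ### Threshold discounted sum -/

/-- `W = {w | Disc_λ(w) exists and is ≥ 0}`. -/
def WDisc (lam : ℝ) : Set (ColSeq ℝ) :=
  {w | ∃ L : ℝ, Filter.Tendsto (fun n => ∑ i ∈ Finset.range n, lam ^ i * w i)
      Filter.atTop (nhds L) ∧ 0 ≤ L}


/-! ### Auxiliary development for the proof -/

section WPdev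

open MeasureTheory

/-- Rank of a color: the totally ordered value for the weak parity preference. -/
def rk (c : ℕ) : ℤ := if Even c then (c : ℤ) else -(c : ℤ)

lemma rk_le_self (c : ℕ) : rk c ≤ (c : ℤ) := by
  unfold rk; split <;> omega

lemma neg_le_rk (c : ℕ) : -(c : ℤ) ≤ rk c := by
  unfold rk; split <;> omega

lemma rk_even (c : ℕ) (h : Even c) : rk c = (c : ℤ) := if_pos h

/-- Dominance: a better rank is at least as good after any accumulated maximum. -/
lemma dom_even {m c c' : ℕ} (h : rk c' ≤ rk c) (h' : Even (max m c')) : Even (max m c) := by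
  rcases le_total c m with hcm | hmc
  · rw [max_eq_left hcm]
    rcases le_total c' m with h1 | h2
    · rwa [max_eq_left h1] at h'
    · rw [max_eq_right h2] at h'
      have hc' : rk c' = (c' : ℤ) := if_pos h'
      by_cases hc : Even c
      · have hcr : rk c = (c : ℤ) := if_pos hc
        have hm : m = c' := le_antisymm h2 (by omega)
        exact hm ▸ h'
      · have hcr : rk c = -(c : ℤ) := if_neg hc
        have hc0 : c = 0 := by omega
        exact absurd (hc0 ▸ Even.zero) hc
  · rw [max_eq_right hmc]
    rcases le_total c' m with h1 | h2
    · rw [max_eq_left h1] at h'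
      by_contra hc
      have hcr : rk c = -(c : ℤ) := if_neg hc
      by_cases hc' : Even c'
      · have : rk c' = (c' : ℤ) := if_pos hc'
        have hc0 : c = 0 := by omega
        exact hc (hc0 ▸ Even.zero)
      · have : rk c' = -(c' : ℤ) := if_neg hc'
        have hcm' : c = m := by omega
        exact hc (hcm' ▸ h')
    · rw [max_eq_right h2] at h'
      have h1' : rk c' = (c' : ℤ) := if_pos h'
      by_contra hc
      have : rk c = -(c : ℤ) := if_neg hc
      have hc0 : c = 0 := by omega
      exact hc (hc0 ▸ Even.zero)

/-- Maximum of a bounded sequence of naturals. -/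
noncomputable def seqMax (x : ColSeq ℕ) : ℕ := sSup (Set.range x)

lemma seqMax_le {x : ColSeq ℕ} {b : ℕ} (h : ∀ i, x i ≤ b) : seqMax x ≤ b :=
  csSup_le ⟨x 0, ⟨0, rfl⟩⟩ (by rintro _ ⟨i, rfl⟩; exact h i)

lemma le_seqMax {x : ColSeq ℕ} {b : ℕ} (h : ∀ i, x i ≤ b) (i : ℕ) : x i ≤ seqMax x :=
  le_csSup ⟨b, by rintro _ ⟨j, rfl⟩; exact h j⟩ ⟨i, rfl⟩

lemma seqMax_mem {x : ColSeq ℕ} {b : ℕ} (h : ∀ i, x i ≤ b) : ∃ i, x i = seqMax x := by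
  have h1 : sSup (Set.range x) ∈ Set.range x :=
    Nat.sSup_mem (Set.range_nonempty x) ⟨b, by rintro _ ⟨j, rfl⟩; exact h j⟩
  exact h1

lemma mem_Wwp_iff {x : ColSeq ℕ} {b : ℕ} (h : ∀ i, x i ≤ b) :
    x ∈ Wwp ↔ Even (seqMax x) := by
  constructor
  · rintro ⟨m, hub, ⟨i, hi⟩, hev⟩
    have hm : seqMax x = m := le_antisymm (seqMax_le hub) (hi ▸ le_seqMax hub i)
    rwa [hm]
  · intro hev
    exact ⟨seqMax x, fun i => le_seqMax h i, seqMax_mem h, hev⟩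

lemma prependWord_nil (x : ColSeq ℕ) : prependWord ([] : List ℕ) x = x := by
  funext i; simp [prependWord]

lemma prependWord_cons (c : ℕ) (w : List ℕ) (x : ColSeq ℕ) :
    prependWord (c :: w) x = fun i => Nat.casesOn i c (fun j => prependWord w x j) := by
  funext i
  cases i with
  | zero => simp [prependWord]
  | succ j =>
      by_cases h : j < w.length
      · have h' : j + 1 < (c :: w).length := by simpa using Nat.succ_lt_succ h
        simp only [prependWord, dif_pos h, dif_pos h']
        rfl
      · have h' : ¬ (j + 1 < (c :: w).length) := by simpa using fun hh => h (Nat.lt_of_succ_lt_succ hh)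
        simp only [prependWord, dif_neg h, dif_neg h']
        congr 1
        simp [List.length_cons]

lemma le_foldl_max (l : List ℕ) : ∀ a : ℕ, a ≤ l.foldl max a := by
  induction l with
  | nil => intro a; simp
  | cons c t ih =>
      intro a
      simp only [List.foldl_cons]
      exact le_trans (le_max_left a c) (ih (max a c))

lemma mem_le_foldl_max {c : ℕ} {l : List ℕ} (h : c ∈ l) (a : ℕ) : c ≤ l.foldl max a := by
  induction l generalizing a with
  | nil => simp at h
  | cons d t ih =>
      simp only [List.foldl_cons]
      rcases List.mem_cons.1 h with rfl | h'
      · exact le_trans (le_max_right a c) (le_foldl_max t _)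
      · exact ih h' _

lemma prependWord_le {w : List ℕ} {x : ColSeq ℕ} {b : ℕ} (h : ∀ i, x i ≤ b) (i : ℕ) :
    prependWord w x i ≤ w.foldl max b := by
  unfold prependWord
  split
  · next hi => exact mem_le_foldl_max (List.get_mem w ⟨_, hi⟩) b
  · exact le_trans (h _) (le_foldl_max w b)

lemma foldl_max_shift (l : List ℕ) : ∀ a b : ℕ, l.foldl max (max a b) = max b (l.foldl max a) := by
  induction l with
  | nil => intro a b; simp [max_comm]
  | cons d t ih =>
      intro a b
      simp only [List.foldl_cons]
      rw [sup_right_comm a b d, ih (max a d) b]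

lemma foldl_max_base (l : List ℕ) (a : ℕ) : l.foldl max a = max a (l.foldl max 0) := by
  have := foldl_max_shift l 0 a
  rwa [Nat.zero_max] at this

lemma seqMax_cons {c : ℕ} {x : ColSeq ℕ} {b : ℕ} (h : ∀ i, x i ≤ b) :
    seqMax (fun i => Nat.casesOn i c (fun j => x j) : ColSeq ℕ) = max c (seqMax x) := by
  have hr : Set.range (fun i => Nat.casesOn i c (fun j => x j) : ColSeq ℕ)
      = {c} ∪ Set.range x := by
    ext y
    constructor
    · rintro ⟨i, rfl⟩
      cases i with
      | zero => exact Or.inl rfl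
      | succ j => exact Or.inr ⟨j, rfl⟩
    · rintro (rfl | ⟨j, rfl⟩)
      · exact ⟨0, rfl⟩
      · exact ⟨j + 1, rfl⟩
  unfold seqMax
  rw [hr, csSup_union (bddAbove_singleton) (Set.singleton_nonempty c)
      ⟨b, by rintro _ ⟨j, rfl⟩; exact h j⟩ (Set.range_nonempty x), csSup_singleton]

lemma seqMax_prepend {x : ColSeq ℕ} {b : ℕ} (h : ∀ i, x i ≤ b) (w : List ℕ) :
    seqMax (prependWord w x) = w.foldl max (seqMax x) := by
  induction w with
  | nil => rw [prependWord_nil]; simp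
  | cons c w' ih =>
      rw [prependWord_cons, seqMax_cons (b := w'.foldl max b) (prependWord_le h),
        ih, List.foldl_cons]
      rw [foldl_max_base w' (max (seqMax x) c), foldl_max_base w' (seqMax x)]
      omega

/-! #### Measurability on `ColSeq ℕ` -/

lemma measurableSet_wordCyl {C : Type*} (u : List C) : MeasurableSet (wordCyl u) :=
  MeasurableSpace.measurableSet_generateFrom ⟨u, rfl⟩

lemma measurableSet_coord_eq (i : ℕ) (c : ℕ) :
    MeasurableSet {w : ColSeq ℕ | w i = c} := by
  have : {w : ColSeq ℕ | w i = c}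
      = ⋃ (u : {l : List ℕ // l.length = i}), wordCyl (u.1 ++ [c]) := by
    ext w
    constructor
    · intro (hw : w i = c)
      have hLlen : (List.ofFn (fun j : Fin i => w j)).length = i := by simp
      refine Set.mem_iUnion.2 ⟨⟨List.ofFn (fun j : Fin i => w j), hLlen⟩, ?_⟩
      show w ∈ wordCyl (List.ofFn (fun j : Fin i => w j) ++ [c])
      intro j
      have hjlt : (j : ℕ) < i + 1 := by
        have := j.2
        simp only [List.length_append, hLlen, List.length_singleton] at this
        omega
      rcases lt_or_ge (j : ℕ) i with hj | hj
      · have hj' : (j : ℕ) < (List.ofFn (fun j : Fin i => w j)).length := by omega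
        rw [List.get_eq_getElem, List.getElem_append_left hj']
        simp
      · have hji : (j : ℕ) = i := by omega
        rw [List.get_eq_getElem, List.getElem_append_right (by omega)]
        simp [hLlen, hji, hw]
    · intro hw
      rcases Set.mem_iUnion.1 hw with ⟨u, hu⟩
      have hlen : (u.1 ++ [c]).length = i + 1 := by simp [u.2]
      have := hu ⟨i, by omega⟩
      simp only [List.get_eq_getElem] at this
      rw [List.getElem_append_right (by omega : u.1.length ≤ i)] at this
      simpa [u.2] using this
  rw [this]
  exact MeasurableSet.iUnion fun u => measurableSet_wordCyl _

lemma measurable_coordFn (i : ℕ) : Measurable (fun w : ColSeq ℕ => w i) :=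
  measurable_to_countable' (fun c => measurableSet_coord_eq i c)

lemma measurableSet_Wwp : MeasurableSet Wwp := by
  have : Wwp = ⋃ (m : ℕ), ⋃ (_ : Even m),
      ((⋂ i, (fun w : ColSeq ℕ => w i) ⁻¹' Set.Iic m) ∩ ⋃ i, {w : ColSeq ℕ | w i = m}) := by
    ext w
    simp only [Wwp, Set.mem_setOf_eq, Set.mem_iUnion, Set.mem_inter_iff, Set.mem_iInter,
      Set.mem_preimage, Set.mem_Iic]
    constructor
    · rintro ⟨m, h1, h2, h3⟩; exact ⟨m, h3, h1, h2⟩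
    · rintro ⟨m, h3, h1, h2⟩; exact ⟨m, h1, h2, h3⟩
  rw [this]
  refine MeasurableSet.iUnion fun m => MeasurableSet.iUnion fun _ => ?_
  exact (MeasurableSet.iInter fun i => (measurable_coordFn i) measurableSet_Iic).inter
    (MeasurableSet.iUnion fun i => measurableSet_coord_eq i m)

lemma measurable_prependWord (u : List ℕ) :
    Measurable (prependWord u : ColSeq ℕ → ColSeq ℕ) := by
  refine measurable_generateFrom ?_
  rintro E ⟨v, rfl⟩
  have : prependWord u ⁻¹' wordCyl v
      = ⋂ (i : Fin v.length), {w : ColSeq ℕ | prependWord u w i.1 = v.get i} := by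
    ext w
    simp only [Set.mem_preimage, wordCyl, Set.mem_setOf_eq, Set.mem_iInter]
  rw [this]
  refine MeasurableSet.iInter fun i => ?_
  by_cases h : (i : ℕ) < u.length
  · have : {w : ColSeq ℕ | prependWord u w i.1 = v.get i}
        = {w : ColSeq ℕ | u.get ⟨i.1, h⟩ = v.get i} := by
      ext w; simp only [Set.mem_setOf_eq, prependWord, dif_pos h]
    rw [this]
    by_cases hc : u.get ⟨i.1, h⟩ = v.get i
    · have h2 : {w : ColSeq ℕ | u.get ⟨i.1, h⟩ = v.get i} = Set.univ := by
        ext w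
        simp only [Set.mem_setOf_eq, Set.mem_univ, iff_true]
        exact hc
      rw [h2]; exact MeasurableSet.univ
    · have h2 : {w : ColSeq ℕ | u.get ⟨i.1, h⟩ = v.get i} = ∅ := by
        ext w
        simp only [Set.mem_setOf_eq, Set.mem_empty_iff_false, iff_false]
        exact hc
      rw [h2]; exact MeasurableSet.empty
  · have : {w : ColSeq ℕ | prependWord u w i.1 = v.get i}
        = {w : ColSeq ℕ | w (i.1 - u.length) = v.get i} := by
      ext w; simp only [Set.mem_setOf_eq, prependWord, dif_neg h]
    rw [this]
    exact measurableSet_coord_eq _ _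

end WPdev


/-! ### The combinatorial core: deterministic games with `rank(max color)` payoff -/

section DGameDev

/-- A finite deterministic two-player game. -/
structure DGame where
  S : Type
  A : Type
  [finS : Finite S]
  [finA : Finite A]
  own : S → Bool
  nx : S → A → Option S
  cl : S → A → ℕ
  nonblock : ∀ s, ∃ a, (nx s a).isSome

attribute [instance] DGame.finS DGame.finA

namespace DGame

variable (G : DGame)

/-- Consistent plays. -/
def DCons (π : ℕ → G.S × G.A) : Prop := ∀ i, G.nx (π i).1 (π i).2 = some ((π (i + 1)).1)

/-- A play follows a positional strategy at the states of a player. -/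
def DFol (π : ℕ → G.S × G.A) (f : G.S → G.A) (pl : Bool) : Prop :=
  ∀ i, G.own (π i).1 = pl → (π i).2 = f ((π i).1)

/-- The payoff of a play: rank of the maximal color. -/
noncomputable def dpay (π : ℕ → G.S × G.A) : ℤ :=
  rk (seqMax (fun i => G.cl (π i).1 (π i).2))

/-- All available colors bounded by `n`. -/
def Bnd (n : ℕ) : Prop := ∀ s a, (G.nx s a).isSome → G.cl s a ≤ n

/-- Positional subgame-perfect equilibrium with value `v`. -/
def GoodPair (f1 f2 : G.S → G.A) (v : G.S → ℤ) : Prop :=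
  (∀ s, (G.nx s (f1 s)).isSome) ∧ (∀ s, (G.nx s (f2 s)).isSome) ∧
  (∀ π, G.DCons π → G.DFol π f2 false → G.dpay π ≤ v ((π 0).1)) ∧
  (∀ π, G.DCons π → G.DFol π f1 true → v ((π 0).1) ≤ G.dpay π)

lemma cons_isSome {π : ℕ → G.S × G.A} (hc : G.DCons π) (i : ℕ) :
    (G.nx (π i).1 (π i).2).isSome := by rw [hc i]; rfl

lemma dpay_le {n : ℕ} {π : ℕ → G.S × G.A} (hbnd : G.Bnd n) (hc : G.DCons π) :
    G.dpay π ≤ (n : ℤ) := by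
  have h : ∀ i, G.cl (π i).1 (π i).2 ≤ n := fun i => hbnd _ _ (G.cons_isSome hc i)
  refine le_trans (rk_le_self _) ?_
  exact_mod_cast seqMax_le h

lemma le_dpay {n : ℕ} {π : ℕ → G.S × G.A} (hbnd : G.Bnd n) (hc : G.DCons π) :
    -(n : ℤ) ≤ G.dpay π := by
  have h : ∀ i, G.cl (π i).1 (π i).2 ≤ n := fun i => hbnd _ _ (G.cons_isSome hc i)
  refine le_trans ?_ (neg_le_rk _)
  have : seqMax (fun i => G.cl (π i).1 (π i).2) ≤ n := seqMax_le h
  omega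

lemma dpay_eq_of_hit {n : ℕ} {π : ℕ → G.S × G.A} (hbnd : G.Bnd n) (hc : G.DCons π)
    (h : ∃ i, G.cl (π i).1 (π i).2 = n) : G.dpay π = rk n := by
  have hub : ∀ i, G.cl (π i).1 (π i).2 ≤ n := fun i => hbnd _ _ (G.cons_isSome hc i)
  obtain ⟨i, hi⟩ := h
  have : seqMax (fun i => G.cl (π i).1 (π i).2) = n :=
    le_antisymm (seqMax_le hub) (hi ▸ le_seqMax hub i)
  unfold dpay
  rw [this]

/-- Default available action. -/
noncomputable def dflt (s : G.S) : G.A := (G.nonblock s).choose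

lemma dflt_isSome (s : G.S) : (G.nx s (G.dflt s)).isSome := (G.nonblock s).choose_spec

/-- The positional action map of a pair of positional strategies. -/
noncomputable def dact (f1 f2 : G.S → G.A) (u : G.S) : G.A := if G.own u then f1 u else f2 u

/-- The equilibrium play. -/
noncomputable def dplayS (f1 f2 : G.S → G.A) (s : G.S) : ℕ → G.S
  | 0 => s
  | (i + 1) => (G.nx (dplayS f1 f2 s i) (G.dact f1 f2 (dplayS f1 f2 s i))).getD s

noncomputable def dplay (f1 f2 : G.S → G.A) (s : G.S) : ℕ → G.S × G.A :=
  fun i => (G.dplayS f1 f2 s i, G.dact f1 f2 (G.dplayS f1 f2 s i))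

lemma dplay_cons (f1 f2 : G.S → G.A) (s : G.S)
    (h1 : ∀ u, (G.nx u (f1 u)).isSome) (h2 : ∀ u, (G.nx u (f2 u)).isSome) :
    G.DCons (G.dplay f1 f2 s) := by
  intro i
  show G.nx _ _ = some ((G.nx _ _).getD s)
  have hs : (G.nx (G.dplayS f1 f2 s i) (G.dact f1 f2 (G.dplayS f1 f2 s i))).isSome := by
    unfold dact
    by_cases ho : G.own (G.dplayS f1 f2 s i)
    · simpa [ho] using h1 _
    · simpa [ho] using h2 _
  obtain ⟨t, ht⟩ := Option.isSome_iff_exists.1 hs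
  show G.nx (G.dplayS f1 f2 s i) (G.dact f1 f2 (G.dplayS f1 f2 s i))
      = some (G.dplayS f1 f2 s (i + 1))
  have hred : G.dplayS f1 f2 s (i + 1)
      = (G.nx (G.dplayS f1 f2 s i) (G.dact f1 f2 (G.dplayS f1 f2 s i))).getD s := rfl
  rw [hred, ht]
  rfl

lemma dplay_fol1 (f1 f2 : G.S → G.A) (s : G.S) : G.DFol (G.dplay f1 f2 s) f1 true := by
  intro i h
  simp only [dplay] at h ⊢
  simp [dact, h]

lemma dplay_fol2 (f1 f2 : G.S → G.A) (s : G.S) : G.DFol (G.dplay f1 f2 s) f2 false := by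
  intro i h
  simp only [dplay] at h ⊢
  simp [dact, h]

lemma dplay_fst (f1 f2 : G.S → G.A) (s : G.S) : (G.dplay f1 f2 s 0).1 = s := rfl

/-! #### Attractors -/

variable (pl : Bool) (d : ℕ)

/-- One attractor step for player `pl` towards the `d`-colored transitions. -/
def attrStep (T : Set G.S) : Set G.S :=
  {u | if G.own u = pl
       then ∃ a, (G.nx u a).isSome ∧ (G.cl u a = d ∨ ∃ t, G.nx u a = some t ∧ t ∈ T)
       else ∀ a, (G.nx u a).isSome → (G.cl u a = d ∨ ∃ t, G.nx u a = some t ∧ t ∈ T)}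

def attrN : ℕ → Set G.S
  | 0 => ∅
  | (k + 1) => G.attrStep pl d (attrN k)

/-- The attractor. -/
def attr : Set G.S := ⋃ k, G.attrN pl d k

lemma attrStep_mono {T T' : Set G.S} (h : T ⊆ T') : G.attrStep pl d T ⊆ G.attrStep pl d T' := by
  intro u
  simp only [attrStep, Set.mem_setOf_eq]
  split
  · rintro ⟨a, ha, hc⟩
    exact ⟨a, ha, hc.imp id (fun ⟨t, ht, hT⟩ => ⟨t, ht, h hT⟩)⟩
  · intro hall a haa
    exact (hall a haa).imp id (fun ⟨t, ht, hT⟩ => ⟨t, ht, h hT⟩)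

lemma attrN_mono : ∀ k, G.attrN pl d k ⊆ G.attrN pl d (k + 1) := by
  intro k
  induction k with
  | zero => exact Set.empty_subset _
  | succ k ih => exact G.attrStep_mono pl d ih

lemma attrN_le {k k' : ℕ} (h : k ≤ k') : G.attrN pl d k ⊆ G.attrN pl d k' := by
  induction h with
  | refl => exact le_refl _
  | step _ ih => exact le_trans ih (G.attrN_mono pl d _)

lemma mem_attr {u : G.S} : u ∈ G.attr pl d ↔ ∃ k, u ∈ G.attrN pl d k := Set.mem_iUnion

lemma attrN_succ_eq (k : ℕ) : G.attrN pl d (k + 1) = G.attrStep pl d (G.attrN pl d k) := rfl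

lemma mem_attrStep_own {T : Set G.S} {u : G.S} (ho : G.own u = pl) :
    u ∈ G.attrStep pl d T ↔
      ∃ a, (G.nx u a).isSome ∧ (G.cl u a = d ∨ ∃ t, G.nx u a = some t ∧ t ∈ T) := by
  unfold attrStep
  rw [Set.mem_setOf_eq, if_pos ho]

lemma mem_attrStep_opp {T : Set G.S} {u : G.S} (ho : ¬ (G.own u = pl)) :
    u ∈ G.attrStep pl d T ↔
      ∀ a, (G.nx u a).isSome → (G.cl u a = d ∨ ∃ t, G.nx u a = some t ∧ t ∈ T) := by
  unfold attrStep
  rw [Set.mem_setOf_eq, if_neg ho]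

lemma attr_subset_attrN : ∃ K, G.attr pl d ⊆ G.attrN pl d K := by
  classical
  have hfin : (G.attr pl d).Finite := Set.toFinite _
  set g : G.S → ℕ := fun u => if h : u ∈ G.attr pl d then ((G.mem_attr pl d).1 h).choose else 0
    with hg
  refine ⟨hfin.toFinset.sup g, ?_⟩
  intro u hu
  have h1 : u ∈ G.attrN pl d (g u) := by
    simp only [hg, dif_pos hu]
    exact ((G.mem_attr pl d).1 hu).choose_spec
  exact G.attrN_le pl d (Finset.le_sup (hfin.mem_toFinset.2 hu)) h1

lemma attr_closed {u : G.S} (h : u ∈ G.attrStep pl d (G.attr pl d)) : u ∈ G.attr pl d := by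
  obtain ⟨K, hK⟩ := G.attr_subset_attrN pl d
  refine (G.mem_attr pl d).2 ⟨K + 1, ?_⟩
  rw [G.attrN_succ_eq]
  exact G.attrStep_mono pl d hK h

lemma escape_own {u : G.S} (hu : u ∉ G.attr pl d) (ho : G.own u = pl) :
    ∀ a, (G.nx u a).isSome → G.cl u a ≠ d ∧ ∀ t, G.nx u a = some t → t ∉ G.attr pl d := by
  intro a ha
  by_contra hcon
  push_neg at hcon
  refine hu (G.attr_closed pl d ?_)
  have hx : ∃ a, (G.nx u a).isSome ∧
      (G.cl u a = d ∨ ∃ t, G.nx u a = some t ∧ t ∈ G.attr pl d) := by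
    by_cases hcd : G.cl u a = d
    · exact ⟨a, ha, Or.inl hcd⟩
    · exact ⟨a, ha, Or.inr (hcon hcd)⟩
  exact (G.mem_attrStep_own pl d ho).2 hx

lemma escape_opp {u : G.S} (hu : u ∉ G.attr pl d) (ho : ¬ (G.own u = pl)) :
    ∃ a, (G.nx u a).isSome ∧ G.cl u a ≠ d ∧ ∀ t, G.nx u a = some t → t ∉ G.attr pl d := by
  by_contra hcon
  push_neg at hcon
  refine hu (G.attr_closed pl d ?_)
  refine (G.mem_attrStep_opp pl d ho).2 ?_
  intro a ha
  by_cases hcd : G.cl u a = d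
  · exact Or.inl hcd
  · exact Or.inr (hcon a ha hcd)

lemma attrN_succ_own {u : G.S} {k : ℕ} (h : u ∈ G.attrN pl d (k + 1)) (ho : G.own u = pl) :
    ∃ a, (G.nx u a).isSome ∧ (G.cl u a = d ∨ ∃ t, G.nx u a = some t ∧ t ∈ G.attrN pl d k) := by
  rw [G.attrN_succ_eq] at h
  exact (G.mem_attrStep_own pl d ho).1 h

lemma attrN_succ_opp {u : G.S} {k : ℕ} (h : u ∈ G.attrN pl d (k + 1)) (ho : ¬ (G.own u = pl)) :
    ∀ a, (G.nx u a).isSome →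
      (G.cl u a = d ∨ ∃ t, G.nx u a = some t ∧ t ∈ G.attrN pl d k) := by
  rw [G.attrN_succ_eq] at h
  exact (G.mem_attrStep_opp pl d ho).1 h

/-- The attractor strategy. -/
noncomputable def fA : G.S → G.A := fun u =>
  if h : u ∈ G.attr pl d ∧ G.own u = pl then
    have hk : ∃ k, u ∈ G.attrN pl d k := (G.mem_attr pl d).1 h.1
    have h1 : u ∈ G.attrN pl d (Nat.find hk) := Nat.find_spec hk
    have h0 : Nat.find hk ≠ 0 := by
      intro h0
      rw [h0] at h1
      exact absurd h1 (by simp [attrN])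
    have h2 : u ∈ G.attrN pl d (Nat.find hk - 1 + 1) := by
      rwa [show Nat.find hk - 1 + 1 = Nat.find hk from by omega]
    (G.attrN_succ_own pl d h2 h.2).choose
  else G.dflt u

lemma fA_spec {u : G.S} (hmem : u ∈ G.attr pl d) (ho : G.own u = pl) :
    (G.nx u (G.fA pl d u)).isSome ∧
      (G.cl u (G.fA pl d u) = d ∨ ∃ t, G.nx u (G.fA pl d u) = some t ∧
        ∃ j, t ∈ G.attrN pl d j ∧ u ∉ G.attrN pl d j) := by
  have hcond : u ∈ G.attr pl d ∧ G.own u = pl := ⟨hmem, ho⟩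
  have hk : ∃ k, u ∈ G.attrN pl d k := (G.mem_attr pl d).1 hmem
  have h1 : u ∈ G.attrN pl d (Nat.find hk) := Nat.find_spec hk
  have h0 : Nat.find hk ≠ 0 := by
    intro h0
    rw [h0] at h1
    exact absurd h1 (by simp [attrN])
  have h2 : u ∈ G.attrN pl d (Nat.find hk - 1 + 1) := by
    rwa [show Nat.find hk - 1 + 1 = Nat.find hk from by omega]
  have hch := (G.attrN_succ_own pl d h2 ho).choose_spec
  have hfa : G.fA pl d u = (G.attrN_succ_own pl d h2 ho).choose := by
    unfold fA
    rw [dif_pos hcond]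
  rw [hfa]
  refine ⟨hch.1, hch.2.imp id ?_⟩
  rintro ⟨t, ht, hT⟩
  exact ⟨t, ht, Nat.find hk - 1, hT, Nat.find_min hk (by omega)⟩

lemma fA_isSome (u : G.S) : (G.nx u (G.fA pl d u)).isSome := by
  by_cases h : u ∈ G.attr pl d ∧ G.own u = pl
  · exact (G.fA_spec pl d h.1 h.2).1
  · unfold fA
    rw [dif_neg h]
    exact G.dflt_isSome u

/-- Attractor guarantee: following `fA` from the attractor hits a `d`-colored transition. -/
lemma reach : ∀ k, ∀ π : ℕ → G.S × G.A, G.DCons π →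
    (∀ i, (π i).1 ∈ G.attr pl d → G.own (π i).1 = pl → (π i).2 = G.fA pl d ((π i).1)) →
    (π 0).1 ∈ G.attrN pl d k → ∃ i, G.cl (π i).1 (π i).2 = d := by
  intro k
  induction k with
  | zero => intro π _ _ h; simp [attrN] at h
  | succ k ih =>
      intro π hc hf h0
      have hmem : (π 0).1 ∈ G.attr pl d := (G.mem_attr pl d).2 ⟨k + 1, h0⟩
      by_cases ho : G.own (π 0).1 = pl
      · have hact : (π 0).2 = G.fA pl d ((π 0).1) := hf 0 hmem ho
        have hspec := G.fA_spec pl d hmem ho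
        rcases hspec.2 with hcd | ⟨t, ht, j, htj, huj⟩
        · exact ⟨0, by rw [hact]; exact hcd⟩
        · have h1 : (π 1).1 = t := by
            have hcc := hc 0
            rw [hact, ht] at hcc
            exact (Option.some_injective _ hcc).symm
          have hjk : j ≤ k := by
            by_contra hj
            exact huj (G.attrN_le pl d (by omega) h0)
          have h1k : (π 1).1 ∈ G.attrN pl d k := G.attrN_le pl d hjk (h1 ▸ htj)
          obtain ⟨i, hi⟩ := ih (fun i => π (i + 1)) (fun i => hc (i + 1)) (fun i => hf (i + 1)) h1k
          exact ⟨i + 1, hi⟩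
      · have hall := G.attrN_succ_opp pl d h0 ho
        rcases hall _ (G.cons_isSome hc 0) with hcd | ⟨t, ht, htk⟩
        · exact ⟨0, hcd⟩
        · have h1 : (π 1).1 = t := by
            have hcc := hc 0
            rw [ht] at hcc
            exact (Option.some_injective _ hcc).symm
          obtain ⟨i, hi⟩ := ih (fun i => π (i + 1)) (fun i => hc (i + 1)) (fun i => hf (i + 1))
            (h1 ▸ htk)
          exact ⟨i + 1, hi⟩

/-! #### The subgame outside the attractor -/

/-- The subgame: outside the attractor, forbid `d`-colored transitions and
transitions into the attractor; inside the attractor the game is unchanged but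
colors are reset to `0`. -/
noncomputable def sub : DGame where
  S := G.S
  A := G.A
  finS := G.finS
  finA := G.finA
  own := G.own
  nx := fun u a =>
    if u ∈ G.attr pl d then G.nx u a
    else if G.cl u a = d then none
    else (G.nx u a).bind (fun t => if t ∈ G.attr pl d then none else some t)
  cl := fun u a => if u ∈ G.attr pl d then 0 else G.cl u a
  nonblock := by
    intro u
    by_cases hu : u ∈ G.attr pl d
    · obtain ⟨a, ha⟩ := G.nonblock u
      exact ⟨a, by simpa [hu] using ha⟩
    · by_cases ho : G.own u = pl
      · have h := G.escape_own pl d hu ho (G.dflt u) (G.dflt_isSome u)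
        obtain ⟨t, ht⟩ := Option.isSome_iff_exists.1 (G.dflt_isSome u)
        exact ⟨G.dflt u, by simp [hu, h.1, ht, h.2 t ht]⟩
      · obtain ⟨a, ha, hcd, hT⟩ := G.escape_opp pl d hu ho
        obtain ⟨t, ht⟩ := Option.isSome_iff_exists.1 ha
        exact ⟨a, by simp [hu, hcd, ht, hT t ht]⟩

lemma sub_nx_le {u : G.S} {a : G.A} {t : G.S} (h : (G.sub pl d).nx u a = some t) :
    G.nx u a = some t := by
  by_cases hu : u ∈ G.attr pl d
  · simpa [sub, hu] using h
  · by_cases hcd : G.cl u a = d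
    · simp [sub, hu, hcd] at h
    · cases hnx : G.nx u a with
      | none => simp [sub, hu, hcd, hnx] at h
      | some t' =>
          by_cases ht' : t' ∈ G.attr pl d
          · simp [sub, hu, hcd, hnx, ht'] at h
          · have h2 : some t' = some t := by
              simpa [sub, hu, hcd, hnx, ht'] using h
            exact h2

lemma sub_isSome {u : G.S} {a : G.A} (h : ((G.sub pl d).nx u a).isSome) :
    (G.nx u a).isSome := by
  obtain ⟨t, ht⟩ := Option.isSome_iff_exists.1 h
  rw [G.sub_nx_le pl d ht]
  rfl

lemma sub_nx_notT {u : G.S} {a : G.A} {t : G.S} (hu : u ∉ G.attr pl d)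
    (h : (G.sub pl d).nx u a = some t) : G.cl u a ≠ d ∧ t ∉ G.attr pl d := by
  by_cases hcd : G.cl u a = d
  · simp [sub, hu, hcd] at h
  · refine ⟨hcd, ?_⟩
    cases hnx : G.nx u a with
    | none => simp [sub, hu, hcd, hnx] at h
    | some t' =>
        by_cases ht' : t' ∈ G.attr pl d
        · simp [sub, hu, hcd, hnx, ht'] at h
        · have : t' = t := by simpa [sub, hu, hcd, hnx, ht'] using h
          exact this ▸ ht'

lemma sub_nx_of {u : G.S} {a : G.A} {t : G.S} (hu : u ∉ G.attr pl d) (hcd : G.cl u a ≠ d)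
    (ht : G.nx u a = some t) (htT : t ∉ G.attr pl d) : (G.sub pl d).nx u a = some t := by
  simp [sub, hu, hcd, ht, htT]

lemma sub_cl_notT {u : G.S} (a : G.A) (hu : u ∉ G.attr pl d) :
    (G.sub pl d).cl u a = G.cl u a := by simp [sub, hu]

lemma sub_own {u : G.S} : (G.sub pl d).own u = G.own u := rfl

lemma sub_bnd {n : ℕ} (hb : G.Bnd (n + 1)) : (G.sub pl (n + 1)).Bnd n := by
  intro u a ha
  by_cases hu : u ∈ G.attr pl (n + 1)
  · simp [sub, hu]
    exact (if_pos hu).trans_le (Nat.zero_le _)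
  · obtain ⟨t, ht⟩ := Option.isSome_iff_exists.1 ha
    have h1 := G.sub_nx_notT pl (n + 1) hu ht
    have h2 := hb u a (G.sub_isSome pl (n + 1) ha)
    rw [G.sub_cl_notT pl (n + 1) a hu]
    omega

end DGame

/-- Existence of positional subgame-perfect equilibria for the rank-of-max payoff. -/
theorem dgame_core : ∀ (n : ℕ) (G : DGame), G.Bnd n → ∃ f1 f2 v, G.GoodPair f1 f2 v := by
  intro n
  induction n with
  | zero =>
      intro G hb
      refine ⟨G.dflt, G.dflt, fun _ => 0, G.dflt_isSome, G.dflt_isSome, ?_, ?_⟩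
      all_goals {
        intro π hc _
        have h0 : ∀ i, G.cl (π i).1 (π i).2 = 0 :=
          fun i => Nat.le_zero.1 (hb _ _ (G.cons_isSome hc i))
        have hmax : seqMax (fun i => G.cl (π i).1 (π i).2) = 0 :=
          Nat.le_zero.1 (seqMax_le (fun i => (h0 i).le))
        unfold DGame.dpay
        rw [hmax]
        simp [rk]
      }
  | succ n ih =>
      intro G hb
      rcases Nat.even_or_odd (n + 1) with he | hoD
      · -- d = n+1 even : attractor for player 1
        obtain ⟨f1', f2', v', h1', h2', ha', hb'⟩ := ih (G.sub true (n + 1)) (G.sub_bnd true hb)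
        set T := G.attr true (n + 1) with hT
        refine ⟨fun u => if u ∈ T then G.fA true (n + 1) u else f1' u,
                fun u => if u ∈ T then G.dflt u else f2' u,
                fun u => if u ∈ T then ((n : ℤ) + 1) else v' u, ?_, ?_, ?_, ?_⟩
        · intro u
          by_cases hu : u ∈ T
          · simpa [hu] using G.fA_isSome true (n + 1) u
          · simp only [hu, if_false]
            exact G.sub_isSome true (n + 1) (h1' u)
        · intro u
          by_cases hu : u ∈ T
          · simpa [hu] using G.dflt_isSome u
          · simp only [hu, if_false]
            exact G.sub_isSome true (n + 1) (h2' u)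
        · -- (a) plays following f2
          intro π hc hf
          by_cases hu : (π 0).1 ∈ T
          · simp only [if_pos hu]
            exact le_trans (G.dpay_le hb hc) (by push_cast; omega)
          · simp only [if_neg hu]
            have key : ∀ i, (π i).1 ∉ T →
                (G.sub true (n + 1)).nx (π i).1 (π i).2 = some ((π (i + 1)).1) ∧
                  (π (i + 1)).1 ∉ T := by
              intro i hi
              by_cases ho : G.own (π i).1 = true
              · have hesc := G.escape_own true (n + 1) hi ho (π i).2 (G.cons_isSome hc i)
                have hnT := hesc.2 _ (hc i)
                exact ⟨G.sub_nx_of true (n + 1) hi hesc.1 (hc i) hnT, hnT⟩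
              · have hact : (π i).2 = f2' ((π i).1) := by
                  have hff := hf i (by simpa using ho)
                  exact hff.trans (if_neg hi)
                obtain ⟨t, ht⟩ := Option.isSome_iff_exists.1 (h2' ((π i).1))
                have hnx : G.nx (π i).1 (f2' ((π i).1)) = some t := G.sub_nx_le true (n + 1) ht
                have ht1 : t = (π (i + 1)).1 := by
                  have hcc := hc i
                  rw [hact, hnx] at hcc
                  exact Option.some_injective _ hcc
                have hnT := (G.sub_nx_notT true (n + 1) hi ht).2
                rw [hact]
                exact ⟨ht1 ▸ ht, ht1 ▸ hnT⟩
            have hinv : ∀ i, (π i).1 ∉ T := by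
              intro i
              induction i with
              | zero => exact hu
              | succ i ihh => exact (key i ihh).2
            have hc' : (G.sub true (n + 1)).DCons π := fun i => (key i (hinv i)).1
            have hf' : (G.sub true (n + 1)).DFol π f2' false := by
              intro i hoi
              have hff := hf i hoi
              exact hff.trans (if_neg (hinv i))
            have hle := ha' π hc' hf'
            have hpay : (G.sub true (n + 1)).dpay π = G.dpay π := by
              unfold DGame.dpay
              have hfun : (fun i => (G.sub true (n + 1)).cl (π i).1 (π i).2)
                  = (fun i => G.cl (π i).1 (π i).2) :=
                funext fun i => G.sub_cl_notT true (n + 1) _ (hinv i)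
              rw [hfun]
            rw [← hpay]
            exact hle
        · -- (b) plays following f1
          intro π hc hf1
          have hvle : ∀ s, v' s ≤ (n : ℤ) := by
            intro s
            have hcp := (G.sub true (n + 1)).dplay_cons f1' f2' s h1' h2'
            have h3 := hb' ((G.sub true (n + 1)).dplay f1' f2' s) hcp
              ((G.sub true (n + 1)).dplay_fol1 f1' f2' s)
            have h4 := (G.sub true (n + 1)).dpay_le (G.sub_bnd true hb) hcp
            exact le_trans h3 h4
          by_cases hu : (π 0).1 ∈ T
          · simp only [if_pos hu]
            obtain ⟨k, hk⟩ := (G.mem_attr true (n + 1)).1 hu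
            have hfA : ∀ i, (π i).1 ∈ G.attr true (n + 1) → G.own (π i).1 = true →
                (π i).2 = G.fA true (n + 1) ((π i).1) := by
              intro i hiT hio
              have hff := hf1 i hio
              exact hff.trans (if_pos hiT)
            obtain ⟨i, hi⟩ := G.reach true (n + 1) k π hc hfA hk
            have hdp := G.dpay_eq_of_hit hb hc ⟨i, hi⟩
            rw [hdp, rk_even _ he]
            push_cast
            omega
          · simp only [if_neg hu]
            by_cases hall : ∀ i, (π i).1 ∉ T ∧
                (G.sub true (n + 1)).nx (π i).1 (π i).2 = some ((π (i + 1)).1)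
            · have hc' : (G.sub true (n + 1)).DCons π := fun i => (hall i).2
              have hf' : (G.sub true (n + 1)).DFol π f1' true := by
                intro i hoi
                have hff := hf1 i hoi
                exact hff.trans (if_neg (hall i).1)
              have hle := hb' π hc' hf'
              have hpay : (G.sub true (n + 1)).dpay π = G.dpay π := by
                unfold DGame.dpay
                have hfun : (fun i => (G.sub true (n + 1)).cl (π i).1 (π i).2)
                    = (fun i => G.cl (π i).1 (π i).2) :=
                  funext fun i => G.sub_cl_notT true (n + 1) _ (hall i).1
                rw [hfun]
              rw [← hpay]
              exact hle
            · have hex : ∃ i, ¬ ((π i).1 ∉ T ∧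
                  (G.sub true (n + 1)).nx (π i).1 (π i).2 = some ((π (i + 1)).1)) := by
                by_contra hco
                push_neg at hco
                exact hall hco
              have hQ : ∀ j, j < Nat.find hex → (π j).1 ∉ T ∧
                  (G.sub true (n + 1)).nx (π j).1 (π j).2 = some ((π (j + 1)).1) :=
                fun j hj => of_not_not (Nat.find_min hex hj)
              have hN := Nat.find_spec hex
              have hi0T : (π (Nat.find hex)).1 ∉ T := by
                rcases Nat.eq_zero_or_pos (Nat.find hex) with h0 | hpos
                · rw [h0]; exact hu
                · obtain ⟨j, hj⟩ : ∃ j, Nat.find hex = j + 1 := ⟨Nat.find hex - 1, by omega⟩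
                  have hQj := hQ j (by omega)
                  rw [hj]
                  exact (G.sub_nx_notT true (n + 1) hQj.1 hQj.2).2
              have hnx' : (G.sub true (n + 1)).nx (π (Nat.find hex)).1 (π (Nat.find hex)).2 ≠
                  some ((π (Nat.find hex + 1)).1) := fun hcon => hN ⟨hi0T, hcon⟩
              by_cases ho : G.own (π (Nat.find hex)).1 = true
              · exfalso
                have hact := hf1 (Nat.find hex) ho
                replace hact := hact.trans (if_neg hi0T)
                obtain ⟨t, ht⟩ := Option.isSome_iff_exists.1 (h1' ((π (Nat.find hex)).1))
                have hnx : G.nx (π (Nat.find hex)).1 (f1' _) = some t :=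
                  G.sub_nx_le true (n + 1) ht
                have ht1 : t = (π (Nat.find hex + 1)).1 := by
                  have hcc := hc (Nat.find hex)
                  rw [hact, hnx] at hcc
                  exact Option.some_injective _ hcc
                exact hnx' (by rw [hact, ht, ht1]; rfl)
              · by_cases hcd : G.cl (π (Nat.find hex)).1 (π (Nat.find hex)).2 = n + 1
                · have hdp := G.dpay_eq_of_hit hb hc ⟨Nat.find hex, hcd⟩
                  rw [hdp, rk_even _ he]
                  have := hvle ((π 0).1)
                  push_cast
                  omega
                · have htT : (π (Nat.find hex + 1)).1 ∈ T := by
                    by_contra htT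
                    exact hnx' (G.sub_nx_of true (n + 1) hi0T hcd (hc (Nat.find hex)) htT)
                  obtain ⟨k, hk⟩ := (G.mem_attr true (n + 1)).1 htT
                  have hfA : ∀ i, (π (Nat.find hex + 1 + i)).1 ∈ G.attr true (n + 1) →
                      G.own (π (Nat.find hex + 1 + i)).1 = true →
                      (π (Nat.find hex + 1 + i)).2 = G.fA true (n + 1)
                        ((π (Nat.find hex + 1 + i)).1) := by
                    intro i hiT hio
                    have hff := hf1 (Nat.find hex + 1 + i) hio
                    exact hff.trans (if_pos hiT)
                  obtain ⟨i, hi⟩ := G.reach true (n + 1) k (fun j => π (Nat.find hex + 1 + j))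
                    (fun j => hc (Nat.find hex + 1 + j)) hfA hk
                  have hdp := G.dpay_eq_of_hit hb hc ⟨Nat.find hex + 1 + i, hi⟩
                  rw [hdp, rk_even _ he]
                  have := hvle ((π 0).1)
                  push_cast
                  omega
      · -- d = n+1 odd : attractor for player 2
        have hne : ¬ Even (n + 1) := by
          rw [Nat.even_iff, Nat.odd_iff.1 hoD]
          omega
        have hrk : rk (n + 1) = -((n : ℤ) + 1) := by
          unfold rk
          rw [if_neg hne]
          push_cast
          ring
        obtain ⟨f1', f2', v', h1', h2', ha', hb'⟩ := ih (G.sub false (n + 1)) (G.sub_bnd false hb)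
        set T := G.attr false (n + 1) with hT
        refine ⟨fun u => if u ∈ T then G.dflt u else f1' u,
                fun u => if u ∈ T then G.fA false (n + 1) u else f2' u,
                fun u => if u ∈ T then (-((n : ℤ) + 1)) else v' u, ?_, ?_, ?_, ?_⟩
        · intro u
          by_cases hu : u ∈ T
          · simpa [hu] using G.dflt_isSome u
          · simp only [hu, if_false]
            exact G.sub_isSome false (n + 1) (h1' u)
        · intro u
          by_cases hu : u ∈ T
          · simpa [hu] using G.fA_isSome false (n + 1) u
          · simp only [hu, if_false]
            exact G.sub_isSome false (n + 1) (h2' u)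
        · -- (a) plays following f2 : here f2 is the attractor strategy on T
          intro π hc hf2
          have hvge : ∀ s, -(n : ℤ) ≤ v' s := by
            intro s
            have hcp := (G.sub false (n + 1)).dplay_cons f1' f2' s h1' h2'
            have h3 := ha' ((G.sub false (n + 1)).dplay f1' f2' s) hcp
              ((G.sub false (n + 1)).dplay_fol2 f1' f2' s)
            have h4 := (G.sub false (n + 1)).le_dpay (G.sub_bnd false hb) hcp
            exact le_trans h4 h3
          by_cases hu : (π 0).1 ∈ T
          · simp only [if_pos hu]
            obtain ⟨k, hk⟩ := (G.mem_attr false (n + 1)).1 hu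
            have hfA : ∀ i, (π i).1 ∈ G.attr false (n + 1) → G.own (π i).1 = false →
                (π i).2 = G.fA false (n + 1) ((π i).1) := by
              intro i hiT hio
              have hff := hf2 i hio
              exact hff.trans (if_pos hiT)
            obtain ⟨i, hi⟩ := G.reach false (n + 1) k π hc hfA hk
            have hdp := G.dpay_eq_of_hit hb hc ⟨i, hi⟩
            rw [hdp, hrk]
          · simp only [if_neg hu]
            by_cases hall : ∀ i, (π i).1 ∉ T ∧
                (G.sub false (n + 1)).nx (π i).1 (π i).2 = some ((π (i + 1)).1)
            · have hc' : (G.sub false (n + 1)).DCons π := fun i => (hall i).2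
              have hf' : (G.sub false (n + 1)).DFol π f2' false := by
                intro i hoi
                have hff := hf2 i hoi
                exact hff.trans (if_neg (hall i).1)
              have hle := ha' π hc' hf'
              have hpay : (G.sub false (n + 1)).dpay π = G.dpay π := by
                unfold DGame.dpay
                have hfun : (fun i => (G.sub false (n + 1)).cl (π i).1 (π i).2)
                    = (fun i => G.cl (π i).1 (π i).2) :=
                  funext fun i => G.sub_cl_notT false (n + 1) _ (hall i).1
                rw [hfun]
              rw [← hpay]
              exact hle
            · have hex : ∃ i, ¬ ((π i).1 ∉ T ∧
                  (G.sub false (n + 1)).nx (π i).1 (π i).2 = some ((π (i + 1)).1)) := by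
                by_contra hco
                push_neg at hco
                exact hall hco
              have hQ : ∀ j, j < Nat.find hex → (π j).1 ∉ T ∧
                  (G.sub false (n + 1)).nx (π j).1 (π j).2 = some ((π (j + 1)).1) :=
                fun j hj => of_not_not (Nat.find_min hex hj)
              have hN := Nat.find_spec hex
              have hi0T : (π (Nat.find hex)).1 ∉ T := by
                rcases Nat.eq_zero_or_pos (Nat.find hex) with h0 | hpos
                · rw [h0]; exact hu
                · obtain ⟨j, hj⟩ : ∃ j, Nat.find hex = j + 1 := ⟨Nat.find hex - 1, by omega⟩
                  have hQj := hQ j (by omega)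
                  rw [hj]
                  exact (G.sub_nx_notT false (n + 1) hQj.1 hQj.2).2
              have hnx' : (G.sub false (n + 1)).nx (π (Nat.find hex)).1 (π (Nat.find hex)).2 ≠
                  some ((π (Nat.find hex + 1)).1) := fun hcon => hN ⟨hi0T, hcon⟩
              by_cases ho : G.own (π (Nat.find hex)).1 = false
              · exfalso
                have hact := hf2 (Nat.find hex) ho
                replace hact := hact.trans (if_neg hi0T)
                obtain ⟨t, ht⟩ := Option.isSome_iff_exists.1 (h2' ((π (Nat.find hex)).1))
                have hnx : G.nx (π (Nat.find hex)).1 (f2' _) = some t :=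
                  G.sub_nx_le false (n + 1) ht
                have ht1 : t = (π (Nat.find hex + 1)).1 := by
                  have hcc := hc (Nat.find hex)
                  rw [hact, hnx] at hcc
                  exact Option.some_injective _ hcc
                exact hnx' (by rw [hact, ht, ht1]; rfl)
              · by_cases hcd : G.cl (π (Nat.find hex)).1 (π (Nat.find hex)).2 = n + 1
                · have hdp := G.dpay_eq_of_hit hb hc ⟨Nat.find hex, hcd⟩
                  rw [hdp, hrk]
                  have := hvge ((π 0).1)
                  omega
                · have htT : (π (Nat.find hex + 1)).1 ∈ T := by
                    by_contra htT
                    exact hnx' (G.sub_nx_of false (n + 1) hi0T hcd (hc (Nat.find hex)) htT)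
                  obtain ⟨k, hk⟩ := (G.mem_attr false (n + 1)).1 htT
                  have hfA : ∀ i, (π (Nat.find hex + 1 + i)).1 ∈ G.attr false (n + 1) →
                      G.own (π (Nat.find hex + 1 + i)).1 = false →
                      (π (Nat.find hex + 1 + i)).2 = G.fA false (n + 1)
                        ((π (Nat.find hex + 1 + i)).1) := by
                    intro i hiT hio
                    have hff := hf2 (Nat.find hex + 1 + i) hio
                    exact hff.trans (if_pos hiT)
                  obtain ⟨i, hi⟩ := G.reach false (n + 1) k (fun j => π (Nat.find hex + 1 + j))
                    (fun j => hc (Nat.find hex + 1 + j)) hfA hk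
                  have hdp := G.dpay_eq_of_hit hb hc ⟨Nat.find hex + 1 + i, hi⟩
                  rw [hdp, hrk]
                  have := hvge ((π 0).1)
                  omega
        · -- (b) plays following f1
          intro π hc hf1
          by_cases hu : (π 0).1 ∈ T
          · simp only [if_pos hu]
            have h3 := G.le_dpay hb hc
            omega
          · simp only [if_neg hu]
            have key : ∀ i, (π i).1 ∉ T →
                (G.sub false (n + 1)).nx (π i).1 (π i).2 = some ((π (i + 1)).1) ∧
                  (π (i + 1)).1 ∉ T := by
              intro i hi
              by_cases ho : G.own (π i).1 = false
              · have hesc := G.escape_own false (n + 1) hi ho (π i).2 (G.cons_isSome hc i)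
                have hnT := hesc.2 _ (hc i)
                exact ⟨G.sub_nx_of false (n + 1) hi hesc.1 (hc i) hnT, hnT⟩
              · have hact : (π i).2 = f1' ((π i).1) := by
                  have hff := hf1 i (by simpa using ho)
                  exact hff.trans (if_neg hi)
                obtain ⟨t, ht⟩ := Option.isSome_iff_exists.1 (h1' ((π i).1))
                have hnx : G.nx (π i).1 (f1' ((π i).1)) = some t := G.sub_nx_le false (n + 1) ht
                have ht1 : t = (π (i + 1)).1 := by
                  have hcc := hc i
                  rw [hact, hnx] at hcc
                  exact Option.some_injective _ hcc
                have hnT := (G.sub_nx_notT false (n + 1) hi ht).2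
                rw [hact]
                exact ⟨ht1 ▸ ht, ht1 ▸ hnT⟩
            have hinv : ∀ i, (π i).1 ∉ T := by
              intro i
              induction i with
              | zero => exact hu
              | succ i ihh => exact (key i ihh).2
            have hc' : (G.sub false (n + 1)).DCons π := fun i => (key i (hinv i)).1
            have hf' : (G.sub false (n + 1)).DFol π f1' true := by
              intro i hoi
              have hff := hf1 i hoi
              exact hff.trans (if_neg (hinv i))
            have hle := hb' π hc' hf'
            have hpay : (G.sub false (n + 1)).dpay π = G.dpay π := by
              unfold DGame.dpay
              have hfun : (fun i => (G.sub false (n + 1)).cl (π i).1 (π i).2)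
                  = (fun i => G.cl (π i).1 (π i).2) :=
                funext fun i => G.sub_cl_notT false (n + 1) _ (hinv i)
              rw [hfun]
            rw [← hpay]
            exact hle

end DGameDev


/-! ### Bridge: pure strategies in deterministic arenas induce unique plays -/

section ArenaBridge

open MeasureTheory

variable (Ar : Arena ℕ)

lemma pmf_pure_inj {α : Type*} {a b : α} (h : (PMF.pure a : PMF α) = PMF.pure b) : a = b := by
  by_contra hne
  have h1 : (PMF.pure a : PMF α) a = 1 := by simp [PMF.pure_apply]
  rw [h, PMF.pure_apply, if_neg hne] at h1
  exact one_ne_zero h1.symm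

/-- Destination of a deterministic transition. -/
noncomputable def dst (s : Ar.S) (a : Ar.A) : Option Ar.S :=
  (Ar.tr s a).map fun p => @Classical.epsilon _ ⟨s⟩ fun s' => p = PMF.pure s'

lemma dst_spec (hdet : Ar.IsDeterministic) {s : Ar.S} {a : Ar.A} {p : PMF Ar.S}
    (htr : Ar.tr s a = some p) : ∃ t, dst Ar s a = some t ∧ p = PMF.pure t := by
  obtain ⟨s', hs'⟩ := hdet s a p htr
  have hspec := Classical.epsilon_spec (⟨s', hs'⟩ : ∃ t, p = PMF.pure t)
  exact ⟨_, by simp [dst, htr], hspec⟩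

lemma dst_isSome_iff {s : Ar.S} {a : Ar.A} : (dst Ar s a).isSome ↔ (Ar.tr s a).isSome := by
  simp [dst]

/-- The deterministic game induced by a deterministic arena. -/
noncomputable def toDG : DGame where
  S := Ar.S
  A := Ar.A
  finS := Ar.finS
  finA := Ar.finA
  own := Ar.owner
  nx := dst Ar
  cl := Ar.col
  nonblock := fun s => (Ar.nonblocking s).imp fun _ ha => (dst_isSome_iff Ar).2 ha

/-- Pure proper strategies on the histories from `s`. -/
def GoodStrats (σ1 σ2 : Strategy Ar) (s : Ar.S) : Prop :=
  (∀ ρ : Hist Ar, ρ.ForPlayer {s} true →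
    (∃ a, σ1 ρ = PMF.pure a) ∧ ∀ a, σ1 ρ a ≠ 0 → Ar.avail ρ.out a) ∧
  (∀ ρ : Hist Ar, ρ.ForPlayer {s} false →
    (∃ a, σ2 ρ = PMF.pure a) ∧ ∀ a, σ2 ρ a ≠ 0 → Ar.avail ρ.out a)

lemma goodStrats_of_mem {σ1 σ2 : Strategy Ar} {s : Ar.S}
    (h1 : StratType.P.Mem σ1 {s} true) (h2 : StratType.P.Mem σ2 {s} false) :
    GoodStrats Ar σ1 σ2 s :=
  ⟨fun ρ hρ => ⟨h1.2 ρ hρ, fun a ha => h1.1 ρ hρ a ha⟩,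
   fun ρ hρ => ⟨h2.2 ρ hρ, fun a ha => h2.1 ρ hρ a ha⟩⟩

variable (σ1 σ2 : Strategy Ar) (s : Ar.S)

/-- The action chosen after a history. -/
noncomputable def chAct (ρ : Hist Ar) : Ar.A :=
  @Classical.epsilon _ ⟨(Ar.nonblocking ρ.out).choose⟩
    fun a => (if Ar.owner ρ.out = true then σ1 else σ2) ρ = PMF.pure a

/-- The state reached after a history. -/
noncomputable def chSt (ρ : Hist Ar) : Ar.S :=
  @Classical.epsilon _ ⟨ρ.out⟩
    fun t => Ar.tr ρ.out (chAct Ar σ1 σ2 ρ) = some (PMF.pure t)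

/-- The sequence of histories of the unique play. -/
noncomputable def seqH : ℕ → Hist Ar
  | 0 => ⟨s, []⟩
  | (n + 1) => ⟨s, (seqH n).steps ++
      [(chAct Ar σ1 σ2 (seqH n), chSt Ar σ1 σ2 (seqH n))]⟩

lemma seqH_first : ∀ n, (seqH Ar σ1 σ2 s n).first = s := by
  intro n
  cases n <;> rfl

lemma seqH_len : ∀ n, (seqH Ar σ1 σ2 s n).steps.length = n := by
  intro n
  induction n with
  | zero => rfl
  | succ n ih => simp [seqH, ih]

lemma spec_of (hdet : Ar.IsDeterministic) (hg : GoodStrats Ar σ1 σ2 s) (ρ : Hist Ar)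
    (hv : ρ.Valid) (hf : ρ.first = s) :
    (if Ar.owner ρ.out = true then σ1 else σ2) ρ = PMF.pure (chAct Ar σ1 σ2 ρ) ∧
      Ar.tr ρ.out (chAct Ar σ1 σ2 ρ) = some (PMF.pure (chSt Ar σ1 σ2 ρ)) := by
  have hst : ρ.Starts {s} := ⟨hv, by simp [hf]⟩
  have hσ : (∃ a, (if Ar.owner ρ.out = true then σ1 else σ2) ρ = PMF.pure a) ∧
      (∀ a, ((if Ar.owner ρ.out = true then σ1 else σ2) ρ) a ≠ 0 → Ar.avail ρ.out a) := by
    by_cases ho : Ar.owner ρ.out = true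
    · have := hg.1 ρ ⟨hst, ho⟩
      rw [if_pos ho]
      exact this
    · have hof : Ar.owner ρ.out = false := by
        cases hb : Ar.owner ρ.out
        · rfl
        · exact absurd hb ho
      have := hg.2 ρ ⟨hst, hof⟩
      rw [if_neg ho]
      exact this
  have h1 : (if Ar.owner ρ.out = true then σ1 else σ2) ρ = PMF.pure (chAct Ar σ1 σ2 ρ) :=
    Classical.epsilon_spec hσ.1
  refine ⟨h1, ?_⟩
  have hne : ((if Ar.owner ρ.out = true then σ1 else σ2) ρ) (chAct Ar σ1 σ2 ρ) ≠ 0 := by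
    rw [h1, PMF.pure_apply, if_pos rfl]
    exact one_ne_zero
  have havail : Ar.avail ρ.out (chAct Ar σ1 σ2 ρ) := hσ.2 _ hne
  obtain ⟨p, hp⟩ := Option.isSome_iff_exists.1 havail
  obtain ⟨t, hdst, hpure⟩ := dst_spec Ar hdet hp
  have hex : ∃ t, Ar.tr ρ.out (chAct Ar σ1 σ2 ρ) = some (PMF.pure t) :=
    ⟨t, by rw [hp, hpure]⟩
  exact Classical.epsilon_spec hex

lemma hist_out_cons (first : Ar.S) (b : Ar.A) (t : Ar.S) (l : List (Ar.A × Ar.S)) :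
    Hist.out (⟨first, (b, t) :: l⟩ : Hist Ar) = Hist.out (⟨t, l⟩ : Hist Ar) := by
  show (t :: List.map Prod.snd l).getLastD first = (List.map Prod.snd l).getLastD t
  rw [List.getLastD_cons]

lemma validSteps_snoc : ∀ (l : List (Ar.A × Ar.S)) (first : Ar.S) (a : Ar.A) (s' : Ar.S),
    Ar.ValidSteps first l → 0 < Ar.prob (Hist.out (⟨first, l⟩ : Hist Ar)) a s' →
    Ar.ValidSteps first (l ++ [(a, s')]) := by
  intro l
  induction l with
  | nil =>
      intro first a s' _ hp
      exact ⟨by simpa [Hist.out] using hp, trivial⟩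
  | cons q l ih =>
      intro first a s' h hp
      obtain ⟨q1, q2⟩ := q
      obtain ⟨h1, h2⟩ := h
      refine ⟨h1, ih q2 a s' h2 ?_⟩
      rwa [hist_out_cons] at hp

lemma prob_of_tr {u : Ar.S} {a : Ar.A} {p : PMF Ar.S} (h : Ar.tr u a = some p) (s' : Ar.S) :
    Ar.prob u a s' = p s' := by
  simp [Arena.prob, h]

lemma seqH_out_succ (n : ℕ) :
    (seqH Ar σ1 σ2 s (n + 1)).out = chSt Ar σ1 σ2 (seqH Ar σ1 σ2 s n) := by
  show Hist.out ⟨s, (seqH Ar σ1 σ2 s n).steps ++ [_]⟩ = _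
  simp [Hist.out, List.getLastD_concat]

lemma seqH_valid (hdet : Ar.IsDeterministic) (hg : GoodStrats Ar σ1 σ2 s) :
    ∀ n, (seqH Ar σ1 σ2 s n).Valid := by
  intro n
  induction n with
  | zero => trivial
  | succ n ih =>
      have hspec := spec_of Ar σ1 σ2 s hdet hg (seqH Ar σ1 σ2 s n) ih (seqH_first Ar σ1 σ2 s n)
      have hp : 0 < Ar.prob ((seqH Ar σ1 σ2 s n).out) (chAct Ar σ1 σ2 (seqH Ar σ1 σ2 s n))
          (chSt Ar σ1 σ2 (seqH Ar σ1 σ2 s n)) := by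
        rw [prob_of_tr Ar hspec.2, PMF.pure_apply, if_pos rfl]
        exact zero_lt_one
      have hout : Hist.out (⟨s, (seqH Ar σ1 σ2 s n).steps⟩ : Hist Ar)
          = (seqH Ar σ1 σ2 s n).out := by
        cases n <;> rfl
      have hvs : Ar.ValidSteps s (seqH Ar σ1 σ2 s n).steps := by
        have hv := ih
        unfold Hist.Valid at hv
        rwa [seqH_first Ar σ1 σ2 s n] at hv
      exact validSteps_snoc Ar (seqH Ar σ1 σ2 s n).steps s
        (chAct Ar σ1 σ2 (seqH Ar σ1 σ2 s n)) (chSt Ar σ1 σ2 (seqH Ar σ1 σ2 s n)) hvs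
        (by rw [hout]; exact hp)

lemma seqH_prefix (n k : ℕ) :
    ∃ t, (seqH Ar σ1 σ2 s (n + k)).steps = (seqH Ar σ1 σ2 s n).steps ++ t := by
  induction k with
  | zero => exact ⟨[], by simp⟩
  | succ k ih =>
      obtain ⟨t, ht⟩ := ih
      exact ⟨t ++ [(chAct Ar σ1 σ2 (seqH Ar σ1 σ2 s (n + k)),
        chSt Ar σ1 σ2 (seqH Ar σ1 σ2 s (n + k)))],
        by rw [show n + (k+1) = (n + k) + 1 from rfl]; simp [seqH, ht]⟩

lemma seqH_getElem {n i : ℕ} (h : i < n) (hl : i < (seqH Ar σ1 σ2 s n).steps.length) :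
    (seqH Ar σ1 σ2 s n).steps[i] =
      (chAct Ar σ1 σ2 (seqH Ar σ1 σ2 s i), chSt Ar σ1 σ2 (seqH Ar σ1 σ2 s i)) := by
  obtain ⟨t, ht⟩ := seqH_prefix Ar σ1 σ2 s (i + 1) (n - (i + 1))
  rw [show i + 1 + (n - (i+1)) = n from by omega] at ht
  have hlen1 : (seqH Ar σ1 σ2 s (i+1)).steps.length = i + 1 := seqH_len Ar σ1 σ2 s (i+1)
  have hleni : (seqH Ar σ1 σ2 s i).steps.length = i := seqH_len Ar σ1 σ2 s i
  have hi1 : i < (seqH Ar σ1 σ2 s (i+1)).steps.length := by omega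
  rw [List.getElem_of_eq ht hl, List.getElem_append_left hi1]
  show ((seqH Ar σ1 σ2 s i).steps ++ [_])[i] = _
  exact List.getElem_concat_length hleni.symm _

/-- The unique play. -/
noncomputable def playOf : Play Ar :=
  ⟨fun n => (seqH Ar σ1 σ2 s n).out, fun n => chAct Ar σ1 σ2 (seqH Ar σ1 σ2 s n)⟩

lemma playOf_st_zero : (playOf Ar σ1 σ2 s).st 0 = s := rfl

lemma mem_cyl_iff (ρ : Hist Ar) (hf : ρ.first = s) :
    playOf Ar σ1 σ2 s ∈ cylSet ρ ↔
      ρ.steps = (seqH Ar σ1 σ2 s ρ.steps.length).steps := by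
  constructor
  · intro hp
    refine List.ext_getElem (by rw [seqH_len]) ?_
    intro i hi hi'
    have h2 := hp.2 ⟨i, hi⟩
    rw [seqH_getElem Ar σ1 σ2 s (by rwa [seqH_len] at hi' ) hi']
    have hac : (playOf Ar σ1 σ2 s).ac i = chAct Ar σ1 σ2 (seqH Ar σ1 σ2 s i) := rfl
    have hst : (playOf Ar σ1 σ2 s).st (i + 1) = chSt Ar σ1 σ2 (seqH Ar σ1 σ2 s i) :=
      seqH_out_succ Ar σ1 σ2 s i
    have e1 := h2.1
    have e2 := h2.2
    rw [hac] at e1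
    rw [hst] at e2
    rw [List.get_eq_getElem] at e1 e2
    exact Prod.ext (by rw [← e1]) (by rw [← e2])
  · intro h
    refine ⟨by rw [hf]; rfl, ?_⟩
    intro i
    have hi := i.2
    have hgl : ρ.steps[(i : ℕ)] =
        (chAct Ar σ1 σ2 (seqH Ar σ1 σ2 s i), chSt Ar σ1 σ2 (seqH Ar σ1 σ2 s i)) := by
      rw [List.getElem_of_eq h i.2]
      exact seqH_getElem Ar σ1 σ2 s (by omega) (by rw [seqH_len]; omega)
    constructor
    · rw [List.get_eq_getElem, hgl]
      rfl
    · rw [List.get_eq_getElem, hgl]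
      exact seqH_out_succ Ar σ1 σ2 s i


lemma histProbAux_eval (hdet : Ar.IsDeterministic) (hg : GoodStrats Ar σ1 σ2 s) :
    ∀ (rest done : List (Ar.A × Ar.S)),
    done = (seqH Ar σ1 σ2 s done.length).steps →
    histProbAux Ar σ1 σ2 s done rest =
      if done ++ rest = (seqH Ar σ1 σ2 s (done.length + rest.length)).steps then 1 else 0 := by
  intro rest
  induction rest with
  | nil =>
      intro done hd
      show (1 : ℝ≥0∞) = _
      rw [if_pos (by simpa using hd)]
  | cons q rest ih =>
      intro done hd
      obtain ⟨a, s'⟩ := q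
      set n := done.length with hn
      have hval : (seqH Ar σ1 σ2 s n).Valid := seqH_valid Ar σ1 σ2 s hdet hg n
      have hspec := spec_of Ar σ1 σ2 s hdet hg (seqH Ar σ1 σ2 s n) hval (seqH_first Ar σ1 σ2 s n)
      have hhist : (⟨s, done⟩ : Hist Ar) = seqH Ar σ1 σ2 s n := by
        have hfst : (seqH Ar σ1 σ2 s n).first = s := seqH_first Ar σ1 σ2 s n
        calc (⟨s, done⟩ : Hist Ar)
            = ⟨(seqH Ar σ1 σ2 s n).first, (seqH Ar σ1 σ2 s n).steps⟩ := by rw [hfst, ← hd]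
          _ = seqH Ar σ1 σ2 s n := rfl
      have hunf : histProbAux Ar σ1 σ2 s done ((a, s') :: rest) =
          stepWeight Ar σ1 σ2 ⟨s, done⟩ a s' *
            histProbAux Ar σ1 σ2 s (done ++ [(a, s')]) rest := rfl
      rw [hunf]
      have hnotpref : ∀ (x : Ar.A × Ar.S), x ≠ (chAct Ar σ1 σ2 (seqH Ar σ1 σ2 s n),
          chSt Ar σ1 σ2 (seqH Ar σ1 σ2 s n)) →
          ¬ (done ++ (x :: rest) = (seqH Ar σ1 σ2 s (done.length + (x :: rest).length)).steps) := by
        intro x hx hcon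
        obtain ⟨tl, htl⟩ := seqH_prefix Ar σ1 σ2 s (n + 1) rest.length
        rw [show done.length + (x :: rest).length = n + 1 + rest.length from by
          simp [hn]; omega] at hcon
        rw [htl] at hcon
        have hsucc : (seqH Ar σ1 σ2 s (n + 1)).steps = done ++
            [(chAct Ar σ1 σ2 (seqH Ar σ1 σ2 s n), chSt Ar σ1 σ2 (seqH Ar σ1 σ2 s n))] := by
          show (seqH Ar σ1 σ2 s n).steps ++ _ = _
          rw [← hd]
        rw [hsucc, List.append_assoc] at hcon
        have := List.append_cancel_left hcon
        rw [List.singleton_append] at this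
        exact hx (List.head_eq_of_cons_eq this)
      by_cases hca : a = chAct Ar σ1 σ2 (seqH Ar σ1 σ2 s n)
      · by_cases hcs : s' = chSt Ar σ1 σ2 (seqH Ar σ1 σ2 s n)
        · have hw : stepWeight Ar σ1 σ2 ⟨s, done⟩ a s' = 1 := by
            unfold stepWeight
            rw [hhist, hca, hcs]
            have happ : (if Ar.owner (seqH Ar σ1 σ2 s n).out = true
                then σ1 (seqH Ar σ1 σ2 s n) (chAct Ar σ1 σ2 (seqH Ar σ1 σ2 s n))
                else σ2 (seqH Ar σ1 σ2 s n) (chAct Ar σ1 σ2 (seqH Ar σ1 σ2 s n)))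
                = ((if Ar.owner (seqH Ar σ1 σ2 s n).out = true then σ1 else σ2)
                    (seqH Ar σ1 σ2 s n)) (chAct Ar σ1 σ2 (seqH Ar σ1 σ2 s n)) := by
              rw [apply_ite (fun σ : Strategy Ar =>
                σ (seqH Ar σ1 σ2 s n) (chAct Ar σ1 σ2 (seqH Ar σ1 σ2 s n)))]
            rw [happ, hspec.1, PMF.pure_apply, if_pos rfl, prob_of_tr Ar hspec.2,
              PMF.pure_apply, if_pos rfl, one_mul]
          rw [hw, one_mul]
          have hd' : done ++ [(a, s')] = (seqH Ar σ1 σ2 s ((done ++ [(a, s')]).length)).steps := by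
            rw [show (done ++ [(a, s')]).length = n + 1 from by simp [hn], hca, hcs]
            show _ = (seqH Ar σ1 σ2 s n).steps ++ _
            rw [← hd]
          have hih := ih (done ++ [(a, s')]) hd'
          rw [hih, show (done ++ [(a, s')]) ++ rest = done ++ (a, s') :: rest from by simp,
            show (done ++ [(a, s')]).length + rest.length = done.length + ((a, s') :: rest).length
              from by simp only [List.length_append, List.length_cons,
                List.length_singleton, List.length_nil]; omega]
        · have hw : stepWeight Ar σ1 σ2 ⟨s, done⟩ a s' = 0 := by
            unfold stepWeight
            rw [hhist, hca, prob_of_tr Ar hspec.2, PMF.pure_apply, if_neg hcs, mul_zero]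
          rw [hw, zero_mul, if_neg]
          exact hnotpref (a, s') (by simp [hcs])
      · have hw : stepWeight Ar σ1 σ2 ⟨s, done⟩ a s' = 0 := by
          unfold stepWeight
          rw [hhist]
          have happ : (if Ar.owner (seqH Ar σ1 σ2 s n).out = true
              then σ1 (seqH Ar σ1 σ2 s n) a else σ2 (seqH Ar σ1 σ2 s n) a)
              = ((if Ar.owner (seqH Ar σ1 σ2 s n).out = true then σ1 else σ2)
                  (seqH Ar σ1 σ2 s n)) a := by
            rw [apply_ite (fun σ : Strategy Ar => σ (seqH Ar σ1 σ2 s n) a)]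
          rw [happ, hspec.1, PMF.pure_apply, if_neg hca, zero_mul]
        rw [hw, zero_mul, if_neg]
        exact hnotpref (a, s') (by simp [hca])

lemma histProb_eval (hdet : Ar.IsDeterministic) (hg : GoodStrats Ar σ1 σ2 s)
    (ρ : Hist Ar) (hf : ρ.first = s) :
    histProb Ar σ1 σ2 ρ =
      if ρ.steps = (seqH Ar σ1 σ2 s ρ.steps.length).steps then 1 else 0 := by
  unfold histProb
  rw [hf]
  have h := histProbAux_eval Ar σ1 σ2 s hdet hg ρ.steps [] rfl
  simpa using h

lemma measurableSet_cylSet (ρ : Hist Ar) : MeasurableSet (cylSet ρ) :=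
  MeasurableSpace.measurableSet_generateFrom ⟨ρ, rfl⟩

lemma isPlayMeasure_dirac (hdet : Ar.IsDeterministic) (hg : GoodStrats Ar σ1 σ2 s) :
    IsPlayMeasure Ar σ1 σ2 s (Measure.dirac (playOf Ar σ1 σ2 s)) := by
  refine ⟨by infer_instance, ?_, ?_⟩
  · intro ρ hρ
    rw [Measure.dirac_apply' _ (measurableSet_cylSet Ar ρ),
      histProb_eval Ar σ1 σ2 s hdet hg ρ hρ]
    by_cases h : ρ.steps = (seqH Ar σ1 σ2 s ρ.steps.length).steps
    · rw [if_pos h, Set.indicator_of_mem ((mem_cyl_iff Ar σ1 σ2 s ρ hρ).2 h)]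
      rfl
    · rw [if_neg h, Set.indicator_of_notMem (fun hm => h ((mem_cyl_iff Ar σ1 σ2 s ρ hρ).1 hm))]
  · intro ρ hρ
    rw [Measure.dirac_apply' _ (measurableSet_cylSet Ar ρ), Set.indicator_of_notMem]
    intro hm
    exact hρ (by rw [← hm.1]; rfl)

lemma playMeasure_spec (hdet : Ar.IsDeterministic) (hg : GoodStrats Ar σ1 σ2 s) :
    IsPlayMeasure Ar σ1 σ2 s (playMeasure Ar σ1 σ2 s) := by
  have hEx : ∃ μ, IsPlayMeasure Ar σ1 σ2 s μ := ⟨_, isPlayMeasure_dirac Ar σ1 σ2 s hdet hg⟩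
  exact Classical.epsilon_spec hEx

lemma cylSeq_antitone (n : ℕ) :
    cylSet (seqH Ar σ1 σ2 s (n + 1)) ⊆ cylSet (seqH Ar σ1 σ2 s n) := by
  intro p hp
  constructor
  · exact hp.1.trans (by rw [seqH_first Ar σ1 σ2 s (n + 1), seqH_first Ar σ1 σ2 s n])
  · intro i
    have hi2 : (i : ℕ) < n :=
      lt_of_lt_of_le i.2 (le_of_eq (seqH_len Ar σ1 σ2 s n))
    have hlt : (i : ℕ) < (seqH Ar σ1 σ2 s (n + 1)).steps.length :=
      lt_of_lt_of_le (by omega : (i : ℕ) < n + 1)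
        (le_of_eq (seqH_len Ar σ1 σ2 s (n + 1)).symm)
    have h2 := hp.2 ⟨i, hlt⟩
    rw [List.get_eq_getElem, seqH_getElem Ar σ1 σ2 s (by omega) hlt] at h2
    rw [List.get_eq_getElem, seqH_getElem Ar σ1 σ2 s (by omega) i.2]
    exact h2

lemma singleton_playOf :
    (⋂ n, cylSet (seqH Ar σ1 σ2 s n)) = {playOf Ar σ1 σ2 s} := by
  ext p
  simp only [Set.mem_iInter, Set.mem_singleton_iff]
  constructor
  · intro hp
    have hst : ∀ n, p.st n = (playOf Ar σ1 σ2 s).st n := by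
      intro n
      cases n with
      | zero =>
          have := (hp 0).1
          rw [seqH_first] at this
          exact this
      | succ n =>
          have hlt : n < (seqH Ar σ1 σ2 s (n + 1)).steps.length := by rw [seqH_len]; omega
          have h2 := (hp (n + 1)).2 ⟨n, hlt⟩
          rw [List.get_eq_getElem, seqH_getElem Ar σ1 σ2 s (by omega) hlt] at h2
          rw [h2.2]
          exact (seqH_out_succ Ar σ1 σ2 s n).symm
    have hac : ∀ n, p.ac n = (playOf Ar σ1 σ2 s).ac n := by
      intro n
      have hlt : n < (seqH Ar σ1 σ2 s (n + 1)).steps.length := by rw [seqH_len]; omega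
      have h2 := (hp (n + 1)).2 ⟨n, hlt⟩
      rw [List.get_eq_getElem, seqH_getElem Ar σ1 σ2 s (by omega) hlt] at h2
      exact h2.1
    cases p with
    | mk st ac =>
        have h1 : st = (playOf Ar σ1 σ2 s).st := funext hst
        have h2 : ac = (playOf Ar σ1 σ2 s).ac := funext hac
        rw [h1, h2]
  · intro hp n
    rw [hp]
    refine (mem_cyl_iff Ar σ1 σ2 s (seqH Ar σ1 σ2 s n) (seqH_first Ar σ1 σ2 s n)).2 ?_
    rw [seqH_len]

lemma playMeasure_eval (hdet : Ar.IsDeterministic) (hg : GoodStrats Ar σ1 σ2 s)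
    {E : Set (Play Ar)} (hE : MeasurableSet E) :
    playMeasure Ar σ1 σ2 s E = if playOf Ar σ1 σ2 s ∈ E then 1 else 0 := by
  obtain ⟨hprob, hcyl, _⟩ := playMeasure_spec Ar σ1 σ2 s hdet hg
  haveI := hprob
  have h1 : ∀ n, playMeasure Ar σ1 σ2 s (cylSet (seqH Ar σ1 σ2 s n)) = 1 := by
    intro n
    rw [hcyl (seqH Ar σ1 σ2 s n) (seqH_first Ar σ1 σ2 s n),
      histProb_eval Ar σ1 σ2 s hdet hg _ (seqH_first Ar σ1 σ2 s n)]
    rw [if_pos]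
    rw [seqH_len]
  have hmeas : ∀ n, MeasurableSet (cylSet (seqH Ar σ1 σ2 s n)) :=
    fun n => measurableSet_cylSet Ar _
  have hanti : Antitone (fun n => cylSet (seqH Ar σ1 σ2 s n)) :=
    antitone_nat_of_succ_le (fun n => cylSeq_antitone Ar σ1 σ2 s n)
  have hsing : playMeasure Ar σ1 σ2 s {playOf Ar σ1 σ2 s} = 1 := by
    rw [← singleton_playOf]
    rw [hanti.measure_iInter (fun n => (hmeas n).nullMeasurableSet)
      ⟨0, by rw [h1 0]; exact ENNReal.one_ne_top⟩]
    simp [h1]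
  by_cases h : playOf Ar σ1 σ2 s ∈ E
  · rw [if_pos h]
    refine le_antisymm prob_le_one ?_
    rw [← hsing]
    exact measure_mono (Set.singleton_subset_iff.2 h)
  · rw [if_neg h]
    have hcompl : playMeasure Ar σ1 σ2 s ({playOf Ar σ1 σ2 s}ᶜ) = 0 := by
      have hms : MeasurableSet ({playOf Ar σ1 σ2 s} : Set (Play Ar)) := by
        rw [← singleton_playOf]
        exact MeasurableSet.iInter fun n => hmeas n
      rw [measure_compl hms (measure_ne_top _ _), hsing, measure_univ, tsub_self]
    refine measure_mono_null ?_ hcompl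
    intro p hp hpp
    exact h (by rwa [Set.mem_singleton_iff.1 hpp] at hp)

/-! #### Measurability of `colsω` -/

lemma colsFrom_ofFn (p : Play Ar) : ∀ (k m : ℕ),
    Ar.colsFrom (p.st m) (List.ofFn fun i : Fin k => (p.ac (m + i), p.st (m + i + 1))) =
      List.ofFn fun i : Fin k => Ar.col (p.st (m + i)) (p.ac (m + i)) := by
  intro k
  induction k with
  | zero => intro m; simp [Arena.colsFrom]
  | succ k ih =>
      intro m
      rw [List.ofFn_succ, List.ofFn_succ]
      show Ar.col (p.st m) (p.ac (m + 0)) :: Ar.colsFrom (p.st (m + 0 + 1)) _ = _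
      have harg : (fun i : Fin k => (p.ac (m + (i + 1)), p.st (m + (i + 1) + 1)))
          = (fun i : Fin k => (p.ac (m + 1 + i), p.st (m + 1 + i + 1))) := by
        funext i
        rw [show m + ((i : ℕ) + 1) = m + 1 + (i : ℕ) from by omega]
      have harg2 : (fun i : Fin k => Ar.col (p.st (m + ((i : ℕ) + 1))) (p.ac (m + ((i : ℕ) + 1))))
          = (fun i : Fin k => Ar.col (p.st (m + 1 + (i : ℕ))) (p.ac (m + 1 + (i : ℕ)))) := by
        funext i
        rw [show m + ((i : ℕ) + 1) = m + 1 + (i : ℕ) from by omega]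
      simp only [Fin.val_succ]
      rw [harg, harg2, ih (m + 1)]
      simp

lemma measurable_colsω : Measurable (colsω : Play Ar → ColSeq ℕ) := by
  refine measurable_generateFrom ?_
  rintro E ⟨u, rfl⟩
  classical
  have heq : colsω ⁻¹' wordCyl u =
      ⋃ (q : {q : Ar.S × List (Ar.A × Ar.S) //
          Ar.colsFrom q.1 q.2 = u}), cylSet ⟨q.1.1, q.1.2⟩ := by
    ext p
    simp only [Set.mem_preimage, Set.mem_iUnion]
    constructor
    · intro hp
      refine ⟨⟨(p.st 0, List.ofFn fun i : Fin u.length => (p.ac i, p.st (i + 1))), ?_⟩, ?_⟩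
      · show Ar.colsFrom (p.st 0) _ = u
        have h0 : Ar.colsFrom (p.st 0)
            (List.ofFn fun i : Fin u.length => (p.ac (0 + i), p.st (0 + i + 1)))
            = List.ofFn fun i : Fin u.length => Ar.col (p.st (0 + i)) (p.ac (0 + i)) :=
          colsFrom_ofFn Ar p u.length 0
        simp only [Nat.zero_add] at h0
        rw [h0]
        refine List.ext_getElem (by simp) ?_
        intro i hi hi'
        rw [List.getElem_ofFn]
        have := hp ⟨i, hi'⟩
        simpa [colsω, List.get_eq_getElem] using this
      · refine ⟨rfl, ?_⟩
        intro i
        constructor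
        · simp [List.get_eq_getElem]
        · simp [List.get_eq_getElem]
    · rintro ⟨⟨⟨first, steps⟩, hcols⟩, hp⟩
      intro i
      have hi := i.2
      have hlen : steps.length = u.length := by
        rw [← hcols]
        -- length of colsFrom
        clear hcols hp
        induction steps generalizing first with
        | nil => rfl
        | cons q l ih => obtain ⟨a, t⟩ := q; simpa [Arena.colsFrom] using ih t
      have hsteps : steps = List.ofFn fun j : Fin u.length =>
          (p.ac j, p.st (j + 1)) := by
        refine List.ext_getElem (by simp [hlen]) ?_
        intro j hj hj'
        rw [List.getElem_ofFn]
        have h2 := hp.2 ⟨j, hj⟩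
        rw [List.get_eq_getElem] at h2
        exact Prod.ext (by rw [← h2.1]) (by rw [← h2.2])
      have hfirst : first = p.st 0 := hp.1.symm
      rw [hfirst, hsteps] at hcols
      have h0 : Ar.colsFrom (p.st 0)
          (List.ofFn fun i : Fin u.length => (p.ac (0 + i), p.st (0 + i + 1)))
          = List.ofFn fun i : Fin u.length => Ar.col (p.st (0 + i)) (p.ac (0 + i)) :=
        colsFrom_ofFn Ar p u.length 0
      simp only [Nat.zero_add] at h0
      rw [h0] at hcols
      show colsω p (i : ℕ) = u.get i
      rw [List.get_eq_getElem, List.getElem_of_eq hcols.symm i.2, List.getElem_ofFn]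
      rfl
  rw [heq]
  exact MeasurableSet.iUnion fun q => measurableSet_cylSet Ar _

lemma Pc_eval (hdet : Ar.IsDeterministic) (hg : GoodStrats Ar σ1 σ2 s)
    {E : Set (ColSeq ℕ)} (hE : MeasurableSet E) :
    Pc Ar σ1 σ2 s E = if colsω (playOf Ar σ1 σ2 s) ∈ E then 1 else 0 := by
  unfold Pc
  rw [Measure.map_apply (measurable_colsω Ar) hE]
  exact playMeasure_eval Ar σ1 σ2 s hdet hg (measurable_colsω Ar hE)

lemma dst_of_tr_pure {u : Ar.S} {a : Ar.A} {t : Ar.S} (h : Ar.tr u a = some (PMF.pure t)) :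
    dst Ar u a = some t := by
  unfold dst
  rw [h, Option.map_some]
  congr 1
  exact (pmf_pure_inj (Classical.epsilon_spec
    (⟨t, rfl⟩ : ∃ s', (PMF.pure t : PMF Ar.S) = PMF.pure s'))).symm

lemma getLastD_append' {α : Type*} (l1 l2 : List α) (d : α) :
    (l1 ++ l2).getLastD d = l2.getLastD (l1.getLastD d) := by
  induction l1 generalizing d with
  | nil => simp
  | cons a l1 ih =>
      rw [List.cons_append, List.getLastD_cons, List.getLastD_cons]
      exact ih a

lemma hist_out_append (ρ ρ' : Hist Ar) (h : ρ'.first = ρ.out) :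
    Hist.out (⟨ρ.first, ρ.steps ++ ρ'.steps⟩ : Hist Ar) = ρ'.out := by
  show ((ρ.steps ++ ρ'.steps).map Prod.snd).getLastD ρ.first = _
  rw [List.map_append, getLastD_append']
  show (ρ'.steps.map Prod.snd).getLastD ρ.out = ρ'.out
  rw [← h]
  rfl

lemma shiftMeasure_nil (μ : MeasureTheory.Measure (ColSeq ℕ)) : shiftMeasure [] μ = μ := by
  unfold shiftMeasure
  rw [show (prependWord ([] : List ℕ) : ColSeq ℕ → ColSeq ℕ) = id from
    funext fun x => prependWord_nil x]
  exact MeasureTheory.Measure.map_id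

end ArenaBridge

/-- **Weak parity in deterministic games.** Every initialized two-player deterministic
arena admits a pure memoryless `P`-subgame perfect equilibrium for the preference
relation induced by the weak parity winning condition; in particular, both players have
pure memoryless `P`-optimal strategies in every initialized two-player deterministic
arena. -/
theorem weak_parity_deterministic (X : InitArena ℕ) (hdet : X.Ar.IsDeterministic) :
    ∃ σ1 σ2 : Strategy X.Ar,
      σ1.PureFor X.I true ∧ σ1.MemlessFor X.I true ∧
      σ2.PureFor X.I false ∧ σ2.MemlessFor X.I false ∧
      IsSPE prefWP X.Ar X.I StratType.P σ1 σ2 ∧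
      OptimalFor1 prefWP.le X.Ar X.I StratType.P σ1 ∧
      OptimalFor2 prefWP.le X.Ar X.I StratType.P σ2 := by
  classical
  -- a bound on all colors
  obtain ⟨N, hN⟩ :=
    (Set.finite_range (fun p : X.Ar.S × X.Ar.A => X.Ar.col p.1 p.2)).bddAbove
  have hcolN : ∀ u a, X.Ar.col u a ≤ N := fun u a => hN ⟨(u, a), rfl⟩
  -- the positional equilibrium of the induced deterministic game
  obtain ⟨f1, f2, v, hav1, hav2, hA, hB⟩ :=
    dgame_core N (toDG X.Ar) (fun u a _ => hcolN u a)
  have hv1 : ∀ u : X.Ar.S, X.Ar.avail u (f1 u) := fun u => (dst_isSome_iff X.Ar).1 (hav1 u)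
  have hv2 : ∀ u : X.Ar.S, X.Ar.avail u (f2 u) := fun u => (dst_isSome_iff X.Ar).1 (hav2 u)
  set σS1 : Strategy X.Ar := fun ρ => PMF.pure (f1 ρ.out) with hS1def
  set σS2 : Strategy X.Ar := fun ρ => PMF.pure (f2 ρ.out) with hS2def
  -- membership of the equilibrium strategies in the pure strategies, any initial set
  have hM1 : ∀ I : Set X.Ar.S, StratType.P.Mem σS1 I true := by
    intro I
    refine ⟨?_, fun ρ _ => ⟨f1 ρ.out, rfl⟩⟩
    intro ρ _ a ha
    have hane : a = f1 ρ.out := by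
      by_contra hne
      exact ha (by show (PMF.pure (f1 ρ.out)) a = 0; exact PMF.pure_apply_of_ne (h := hne))
    rw [hane]
    exact hv1 ρ.out
  have hM2 : ∀ I : Set X.Ar.S, StratType.P.Mem σS2 I false := by
    intro I
    refine ⟨?_, fun ρ _ => ⟨f2 ρ.out, rfl⟩⟩
    intro ρ _ a ha
    have hane : a = f2 ρ.out := by
      by_contra hne
      exact ha (by show (PMF.pure (f2 ρ.out)) a = 0; exact PMF.pure_apply_of_ne (h := hne))
    rw [hane]
    exact hv2 ρ.out
  -- the shift of the equilibrium strategies is itself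
  have hshift1 : ∀ ρ : Hist X.Ar, σS1.shift ρ = σS1 := by
    intro ρ
    funext ρ'
    show (if ρ'.first = ρ.out then σS1 ⟨ρ.first, ρ.steps ++ ρ'.steps⟩ else σS1 ρ') = σS1 ρ'
    by_cases h : ρ'.first = ρ.out
    · rw [if_pos h]
      show PMF.pure (f1 (Hist.out ⟨ρ.first, ρ.steps ++ ρ'.steps⟩)) = PMF.pure (f1 ρ'.out)
      rw [hist_out_append X.Ar ρ ρ' h]
    · rw [if_neg h]
  have hshift2 : ∀ ρ : Hist X.Ar, σS2.shift ρ = σS2 := by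
    intro ρ
    funext ρ'
    show (if ρ'.first = ρ.out then σS2 ⟨ρ.first, ρ.steps ++ ρ'.steps⟩ else σS2 ρ') = σS2 ρ'
    by_cases h : ρ'.first = ρ.out
    · rw [if_pos h]
      show PMF.pure (f2 (Hist.out ⟨ρ.first, ρ.steps ++ ρ'.steps⟩)) = PMF.pure (f2 ρ'.out)
      rw [hist_out_append X.Ar ρ ρ' h]
    · rw [if_neg h]
  -- the induced play is a consistent play of the deterministic game
  have hdc : ∀ (σa σb : Strategy X.Ar) (s : X.Ar.S), GoodStrats X.Ar σa σb s →
      (toDG X.Ar).DCons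
        (fun i => ((playOf X.Ar σa σb s).st i, (playOf X.Ar σa σb s).ac i)) := by
    intro σa σb s hg i
    have hspec := spec_of X.Ar σa σb s hdet hg (seqH X.Ar σa σb s i)
      (seqH_valid X.Ar σa σb s hdet hg i) (seqH_first X.Ar σa σb s i)
    show dst X.Ar (Hist.out (seqH X.Ar σa σb s i)) (chAct X.Ar σa σb (seqH X.Ar σa σb s i))
        = some ((playOf X.Ar σa σb s).st (i + 1))
    rw [show (playOf X.Ar σa σb s).st (i + 1) = chSt X.Ar σa σb (seqH X.Ar σa σb s i) from
      seqH_out_succ X.Ar σa σb s i]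
    exact dst_of_tr_pure X.Ar hspec.2
  -- the play follows f2 at player-2 states when player 2 uses σS2
  have hfol2 : ∀ (σa : Strategy X.Ar) (s : X.Ar.S) (hg : GoodStrats X.Ar σa σS2 s),
      (toDG X.Ar).DFol
        (fun i => ((playOf X.Ar σa σS2 s).st i, (playOf X.Ar σa σS2 s).ac i)) f2 false := by
    intro σa s hg i ho
    have ho' : X.Ar.owner (Hist.out (seqH X.Ar σa σS2 s i)) = false := ho
    have hspec := spec_of X.Ar σa σS2 s hdet hg (seqH X.Ar σa σS2 s i)
      (seqH_valid X.Ar σa σS2 s hdet hg i) (seqH_first X.Ar σa σS2 s i)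
    have h1 := hspec.1
    rw [if_neg (by rw [ho']; simp)] at h1
    have h2 : PMF.pure (f2 (Hist.out (seqH X.Ar σa σS2 s i)))
        = PMF.pure (chAct X.Ar σa σS2 (seqH X.Ar σa σS2 s i)) := h1
    exact (pmf_pure_inj h2).symm
  -- the play follows f1 at player-1 states when player 1 uses σS1
  have hfol1 : ∀ (σb : Strategy X.Ar) (s : X.Ar.S) (hg : GoodStrats X.Ar σS1 σb s),
      (toDG X.Ar).DFol
        (fun i => ((playOf X.Ar σS1 σb s).st i, (playOf X.Ar σS1 σb s).ac i)) f1 true := by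
    intro σb s hg i ho
    have ho' : X.Ar.owner (Hist.out (seqH X.Ar σS1 σb s i)) = true := ho
    have hspec := spec_of X.Ar σS1 σb s hdet hg (seqH X.Ar σS1 σb s i)
      (seqH_valid X.Ar σS1 σb s hdet hg i) (seqH_first X.Ar σS1 σb s i)
    have h1 := hspec.1
    rw [if_pos ho'] at h1
    have h2 : PMF.pure (f1 (Hist.out (seqH X.Ar σS1 σb s i)))
        = PMF.pure (chAct X.Ar σS1 σb (seqH X.Ar σS1 σb s i)) := h1
    exact (pmf_pure_inj h2).symm
  -- payoff of the induced play
  have hdp : ∀ (σa σb : Strategy X.Ar) (s : X.Ar.S),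
      (toDG X.Ar).dpay
          (fun i => ((playOf X.Ar σa σb s).st i, (playOf X.Ar σa σb s).ac i))
        = rk (seqMax (colsω (playOf X.Ar σa σb s))) := fun _ _ _ => rfl
  have hcb : ∀ (σa σb : Strategy X.Ar) (s : X.Ar.S) (i : ℕ),
      colsω (playOf X.Ar σa σb s) i ≤ N := fun σa σb s i => hcolN _ _
  -- the value of the shifted measures
  have hPcval : ∀ (σa σb : Strategy X.Ar) (s : X.Ar.S), GoodStrats X.Ar σa σb s →
      ∀ w : List ℕ, shiftMeasure w (Pc X.Ar σa σb s) Wwp =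
        if Even (max (w.foldl max 0) (seqMax (colsω (playOf X.Ar σa σb s)))) then 1 else 0 := by
    intro σa σb s hg w
    unfold shiftMeasure
    rw [MeasureTheory.Measure.map_apply (measurable_prependWord w) measurableSet_Wwp,
      Pc_eval X.Ar σa σb s hdet hg (measurable_prependWord w measurableSet_Wwp)]
    have hiff : colsω (playOf X.Ar σa σb s) ∈ prependWord w ⁻¹' Wwp ↔
        Even (max (w.foldl max 0) (seqMax (colsω (playOf X.Ar σa σb s)))) := by
      show prependWord w (colsω (playOf X.Ar σa σb s)) ∈ Wwp ↔ _
      rw [mem_Wwp_iff (prependWord_le (hcb σa σb s)),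
        seqMax_prepend (hcb σa σb s) w, foldl_max_base w, max_comm]
    exact if_congr hiff rfl rfl
  -- main comparison lemmas
  have hL1 : ∀ (s : X.Ar.S) (σ1' : Strategy X.Ar), StratType.P.Mem σ1' {s} true →
      ∀ w : List ℕ,
      shiftMeasure w (Pc X.Ar σ1' σS2 s) Wwp ≤ shiftMeasure w (Pc X.Ar σS1 σS2 s) Wwp := by
    intro s σ1' hm w
    have hg' : GoodStrats X.Ar σ1' σS2 s := goodStrats_of_mem _ hm (hM2 {s})
    have hg0 : GoodStrats X.Ar σS1 σS2 s := goodStrats_of_mem _ (hM1 {s}) (hM2 {s})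
    rw [hPcval σ1' σS2 s hg' w, hPcval σS1 σS2 s hg0 w]
    have hrank : rk (seqMax (colsω (playOf X.Ar σ1' σS2 s)))
        ≤ rk (seqMax (colsω (playOf X.Ar σS1 σS2 s))) := by
      have h1 := hA (fun i => ((playOf X.Ar σ1' σS2 s).st i, (playOf X.Ar σ1' σS2 s).ac i))
        (hdc σ1' σS2 s hg') (hfol2 σ1' s hg')
      have h2 := hB (fun i => ((playOf X.Ar σS1 σS2 s).st i, (playOf X.Ar σS1 σS2 s).ac i))
        (hdc σS1 σS2 s hg0) (hfol1 σS2 s hg0)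
      rw [hdp] at h1 h2
      exact le_trans h1 h2
    by_cases h' : Even (max (w.foldl max 0) (seqMax (colsω (playOf X.Ar σ1' σS2 s))))
    · rw [if_pos h', if_pos (dom_even hrank h')]
    · rw [if_neg h']
      exact bot_le
  have hL2 : ∀ (s : X.Ar.S) (σ2' : Strategy X.Ar), StratType.P.Mem σ2' {s} false →
      ∀ w : List ℕ,
      shiftMeasure w (Pc X.Ar σS1 σS2 s) Wwp ≤ shiftMeasure w (Pc X.Ar σS1 σ2' s) Wwp := by
    intro s σ2' hm w
    have hg' : GoodStrats X.Ar σS1 σ2' s := goodStrats_of_mem _ (hM1 {s}) hm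
    have hg0 : GoodStrats X.Ar σS1 σS2 s := goodStrats_of_mem _ (hM1 {s}) (hM2 {s})
    rw [hPcval σS1 σ2' s hg' w, hPcval σS1 σS2 s hg0 w]
    have hrank : rk (seqMax (colsω (playOf X.Ar σS1 σS2 s)))
        ≤ rk (seqMax (colsω (playOf X.Ar σS1 σ2' s))) := by
      have h1 := hA (fun i => ((playOf X.Ar σS1 σS2 s).st i, (playOf X.Ar σS1 σS2 s).ac i))
        (hdc σS1 σS2 s hg0) (hfol2 σS1 s hg0)
      have h2 := hB (fun i => ((playOf X.Ar σS1 σ2' s).st i, (playOf X.Ar σS1 σ2' s).ac i))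
        (hdc σS1 σ2' s hg') (hfol1 σ2' s hg')
      rw [hdp] at h1 h2
      exact le_trans h1 h2
    by_cases h' : Even (max (w.foldl max 0) (seqMax (colsω (playOf X.Ar σS1 σS2 s))))
    · rw [if_pos h', if_pos (dom_even hrank h')]
    · rw [if_neg h']
      exact bot_le
  -- unshifted versions
  have hL1' : ∀ (s : X.Ar.S) (σ1' : Strategy X.Ar), StratType.P.Mem σ1' {s} true →
      Pc X.Ar σ1' σS2 s Wwp ≤ Pc X.Ar σS1 σS2 s Wwp := by
    intro s σ1' hm
    have h := hL1 s σ1' hm []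
    rwa [shiftMeasure_nil, shiftMeasure_nil] at h
  have hL2' : ∀ (s : X.Ar.S) (σ2' : Strategy X.Ar), StratType.P.Mem σ2' {s} false →
      Pc X.Ar σS1 σS2 s Wwp ≤ Pc X.Ar σS1 σ2' s Wwp := by
    intro s σ2' hm
    have h := hL2 s σ2' hm []
    rwa [shiftMeasure_nil, shiftMeasure_nil] at h
  have hweak : ∀ (σ' : Strategy X.Ar) (pl : Bool) (s : X.Ar.S), s ∈ X.I →
      StratType.P.Mem σ' X.I pl → StratType.P.Mem σ' {s} pl := by
    intro σ' pl s hsI hm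
    constructor
    · intro ρ hρ
      exact hm.1 ρ ⟨⟨hρ.1.1, by rw [Set.mem_singleton_iff.1 hρ.1.2]; exact hsI⟩, hρ.2⟩
    · intro ρ hρ
      exact hm.2 ρ ⟨⟨hρ.1.1, by rw [Set.mem_singleton_iff.1 hρ.1.2]; exact hsI⟩, hρ.2⟩
  refine ⟨σS1, σS2, fun ρ _ => ⟨f1 ρ.out, rfl⟩, ?_, fun ρ _ => ⟨f2 ρ.out, rfl⟩, ?_, ?_, ?_, ?_⟩
  · intro ρ ρ' _ _ h
    show PMF.pure (f1 ρ.out) = PMF.pure (f1 ρ'.out)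
    rw [h]
  · intro ρ ρ' _ _ h
    show PMF.pure (f2 ρ.out) = PMF.pure (f2 ρ'.out)
    rw [h]
  · -- subgame perfect equilibrium
    intro ρ _
    rw [hshift1 ρ, hshift2 ρ]
    refine ⟨hM1 _, hM2 _, ?_⟩
    intro s hs
    have hseq : s = ρ.out := hs
    subst hseq
    constructor
    · intro σ1' hm1'
      exact hL1 ρ.out σ1' hm1' ρ.cols
    · intro σ2' hm2'
      exact hL2 ρ.out σ2' hm2' ρ.cols
  · -- optimality of player 1
    refine ⟨hM1 X.I, ?_⟩
    intro s hsI σ1' hm1' μ hμ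
    obtain ⟨hprob, σ2'', hm2'', hle⟩ := hμ
    refine ⟨hprob, σS2, hM2 {s}, ?_⟩
    show Pc X.Ar σ1' σS2 s Wwp ≤ μ Wwp
    calc Pc X.Ar σ1' σS2 s Wwp ≤ Pc X.Ar σS1 σS2 s Wwp :=
        hL1' s σ1' (hweak σ1' true s hsI hm1')
      _ ≤ Pc X.Ar σS1 σ2'' s Wwp := hL2' s σ2'' hm2''
      _ ≤ μ Wwp := hle
  · -- optimality of player 2
    refine ⟨hM2 X.I, ?_⟩
    intro s hsI σ2' hm2' μ hμ
    obtain ⟨hprob, σ1'', hm1'', hle⟩ := hμ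
    refine ⟨hprob, σS1, hM1 {s}, ?_⟩
    show μ Wwp ≤ Pc X.Ar σS1 σ2' s Wwp
    calc μ Wwp ≤ Pc X.Ar σ1'' σS2 s Wwp := hle
      _ ≤ Pc X.Ar σS1 σS2 s Wwp := hL1' s σ1'' hm1''
      _ ≤ Pc X.Ar σS1 σ2' s Wwp := hL2' s σ2' (hweak σ2' false s hsI hm2') 

end StochGames
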